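/- arXiv:1512.09039 — 4 statements merged into one kernel-verified Lean document; each statement's English description precedes it below -/
import Mathlib

section
/- Almost sure convergence of the differentially private Laplacian consensus algorithm: Consider n agents executing θ(k+1) = θ(k) − h L x(k) + S η(k), x(k) = θ(k) + η(k), with the stated graph, step size, gain, and Laplace-noise assumptions. Define the random variable θ_∞ = ⟨θ₀⟩ + Σ_{i=1}^n (s_i/n) Σ_{j=0}^∞ η_i(j) (set θ_∞ = ⟨θ₀⟩ on the event where some series Σ_{j=0}^∞ η_i(j) fails to converge). Then θ_∞ is well defined almost surely (i.e., almost surely every series Σ_{j=0}^∞ η_i(j) converges), and almost surely θ(k) → θ_∞·𝟏_n as k → ∞. -/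
open MeasureTheory ProbabilityTheory Filter

/-- The Laplace distribution on `ℝ` with scale `b`, given by the density
`x ↦ (1/(2b)) exp(-|x|/b)` with respect to Lebesgue measure. -/
noncomputable def lap (b : ℝ) : Measure ℝ :=
  volume.withDensity fun x => ENNReal.ofReal ((2 * b)⁻¹ * Real.exp (-|x| / b))

/-- The average `⟨v⟩ = (1/n) 𝟏ᵀ v` of the components of a vector. -/
noncomputable def ave {n : ℕ} (v : Fin n → ℝ) : ℝ := (∑ i, v i) / n

/-- The state trajectory of the dynamics `θ(k+1) = θ(k) - h L x(k) + S η(k)` with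
messages `x(k) = θ(k) + η(k)`, initial state `θ0` and noise sequence `η`. -/
noncomputable def thetaSeq {n : ℕ} (L S : Matrix (Fin n) (Fin n) ℝ) (h : ℝ)
    (θ0 : Fin n → ℝ) (η : ℕ → Fin n → ℝ) : ℕ → Fin n → ℝ
  | 0 => θ0
  | k + 1 =>
      thetaSeq L S h θ0 η k - h • L.mulVec (thetaSeq L S h θ0 η k + η k)
        + S.mulVec (η k)

open scoped Classical in
/-- The convergence point `θ_∞ = ⟨θ₀⟩ + ∑_{i=1}^n (s_i/n) ∑_{j=0}^∞ η_i(j)`,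
set to `⟨θ₀⟩` on the event where some series `∑_{j=0}^∞ η_i(j)` fails to converge. -/
noncomputable def thetaInf {n : ℕ} (θ0 : Fin n → ℝ) (s : Fin n → ℝ)
    (η : ℕ → Fin n → ℝ) : ℝ :=
  if ∀ i, Summable (fun j => η j i) then
    ave θ0 + ∑ i, (s i / n) * ∑' j, η j i
  else ave θ0


-- ### Auxiliary lemmas ###

section LapTail
open Set Real

lemma lap_fun_eq (b : ℝ) : (fun x : ℝ => (2*b)⁻¹ * Real.exp (-x/b))
    = fun x => (2*b)⁻¹ * Real.exp (-b⁻¹ * x) := by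
  funext x; rw [neg_div, div_eq_inv_mul, neg_mul]

lemma lap_intOn {b : ℝ} (hb : 0 < b) (t : ℝ) :
    IntegrableOn (fun x => (2*b)⁻¹ * Real.exp (-x / b)) (Set.Ioi t) := by
  rw [lap_fun_eq]
  exact (exp_neg_integrableOn_Ioi t (by positivity)).const_mul _

lemma lap_half {b t : ℝ} (hb : 0 < b) :
    ∫ x in Set.Ioi t, (2 * b)⁻¹ * Real.exp (-x / b) = Real.exp (-t / b) / 2 := by
  have hderiv : ∀ x ∈ Set.Ioi t, HasDerivAt (fun x => -b * ((2*b)⁻¹ * Real.exp (-x/b)))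
      ((2*b)⁻¹ * Real.exp (-x/b)) x := by
    intro x _
    have h1 : HasDerivAt (fun x : ℝ => -x/b) (-(1/b)) x := by
      exact ((hasDerivAt_neg x).div_const b).congr_deriv (by ring)
    have h2 := (h1.exp.const_mul ((2*b)⁻¹)).const_mul (-b)
    refine h2.congr_deriv ?_
    field_simp
  have htend : Tendsto (fun x => -b * ((2*b)⁻¹ * Real.exp (-x/b))) atTop (nhds 0) := by
    have h0 : Tendsto (fun x : ℝ => -x/b) atTop atBot := by
      apply Tendsto.atBot_div_const hb
      exact tendsto_neg_atBot_iff.mpr tendsto_id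
    have := ((Real.tendsto_exp_atBot.comp h0).const_mul ((2*b)⁻¹)).const_mul (-b)
    simpa using this
  have hcont : ContinuousWithinAt (fun x => -b * ((2*b)⁻¹ * Real.exp (-x/b))) (Set.Ici t) t := by
    apply Continuous.continuousWithinAt
    have : Continuous fun x : ℝ => -x/b := by fun_prop
    exact continuous_const.mul (continuous_const.mul this.rexp)
  have := integral_Ioi_of_hasDerivAt_of_tendsto hcont hderiv (lap_intOn hb t) htend
  rw [this]
  field_simp
  ring

lemma lap_tail {b t : ℝ} (hb : 0 < b) (ht : 0 ≤ t) :
    lap b {x | t < |x|} ≤ ENNReal.ofReal (Real.exp (-t / b)) := by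
  have hmeas : MeasurableSet {x : ℝ | t < |x|} :=
    measurableSet_lt measurable_const measurable_abs
  rw [lap, withDensity_apply _ hmeas]
  have hsub : {x : ℝ | t < |x|} ⊆ Set.Iic (-t) ∪ Set.Ioi t := by
    intro x hx
    rcases le_or_gt 0 x with h | h
    · exact Or.inr (by simpa [abs_of_nonneg h] using hx)
    · left
      simp only [Set.mem_setOf_eq, abs_of_neg h] at hx
      simp only [Set.mem_Iic]; linarith
  calc ∫⁻ x in {x | t < |x|}, ENNReal.ofReal ((2*b)⁻¹ * Real.exp (-|x|/b))
      ≤ ∫⁻ x in Set.Iic (-t) ∪ Set.Ioi t, ENNReal.ofReal ((2*b)⁻¹ * Real.exp (-|x|/b)) :=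
        lintegral_mono_set hsub
    _ ≤ (∫⁻ x in Set.Iic (-t), ENNReal.ofReal ((2*b)⁻¹ * Real.exp (-|x|/b)))
        + ∫⁻ x in Set.Ioi t, ENNReal.ofReal ((2*b)⁻¹ * Real.exp (-|x|/b)) :=
        lintegral_union_le _ _ _
    _ ≤ ENNReal.ofReal (Real.exp (-t/b)/2) + ENNReal.ofReal (Real.exp (-t/b)/2) := by
        gcongr
        · -- Iic part
          have hcongr : ∀ x ∈ Set.Iic (-t), ENNReal.ofReal ((2*b)⁻¹ * Real.exp (-|x|/b))
              = ENNReal.ofReal ((2*b)⁻¹ * Real.exp (x/b)) := by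
            intro x hx
            simp only [Set.mem_Iic] at hx
            rw [abs_of_nonpos (by linarith), neg_neg]
          rw [setLIntegral_congr_fun measurableSet_Iic hcongr]
          have hint : IntegrableOn (fun x => (2*b)⁻¹ * Real.exp (x / b)) (Set.Iic (-t)) := by
            rw [← (Measure.measurePreserving_neg (volume : Measure ℝ)).integrableOn_comp_preimage
              (Homeomorph.neg ℝ).measurableEmbedding]
            simp only [Function.comp_def, neg_preimage, neg_Iic, neg_neg]
            rw [integrableOn_Ici_iff_integrableOn_Ioi]
            exact (lap_intOn hb t).congr_fun (fun x _ => by simp only [neg_div]) measurableSet_Ioi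
          rw [← MeasureTheory.ofReal_integral_eq_lintegral_ofReal hint
            (MeasureTheory.ae_of_all _ (fun x => by positivity))]
          have heq : ∫ x in Set.Iic (-t), (2*b)⁻¹ * Real.exp (x/b)
              = ∫ x in Set.Ioi t, (2*b)⁻¹ * Real.exp (-x/b) := by
            have := integral_comp_neg_Iic (-t) (fun y => (2*b)⁻¹ * Real.exp (-y/b))
            simp only [neg_neg] at this
            rw [← this]
          rw [heq, lap_half hb]
        · have hcongr : ∀ x ∈ Set.Ioi t, ENNReal.ofReal ((2*b)⁻¹ * Real.exp (-|x|/b))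
              = ENNReal.ofReal ((2*b)⁻¹ * Real.exp (-x/b)) := by
            intro x hx
            simp only [Set.mem_Ioi] at hx
            rw [abs_of_nonneg (by linarith)]
          rw [setLIntegral_congr_fun measurableSet_Ioi hcongr]
          rw [← MeasureTheory.ofReal_integral_eq_lintegral_ofReal (lap_intOn hb t)
            (MeasureTheory.ae_of_all _ (fun x => by positivity))]
          rw [lap_half hb]
    _ = ENNReal.ofReal (Real.exp (-t/b)) := by
        rw [← ENNReal.ofReal_add (by positivity) (by positivity)]
        ring_nf

end LapTail

section LinAlg
variable {n : ℕ} (A L : Matrix (Fin n) (Fin n) ℝ)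



lemma symm_apply (hAsymm : A.IsSymm) (i j : Fin n) : A j i = A i j := by
  conv_rhs => rw [← hAsymm]
  rfl

lemma lap_quad (hAsymm : A.IsSymm)
    (hL : L = Matrix.diagonal (fun i => ∑ j, A i j) - A) (v : Fin n → ℝ) :
    ∑ i, v i * L.mulVec v i = (∑ i, ∑ j, A i j * (v i - v j)^2) / 2 := by
  subst hL
  have hswap : ∑ i, ∑ j, A i j * v j ^ 2 = ∑ i, ∑ j, A i j * v i ^ 2 := by
    rw [Finset.sum_comm]
    exact Finset.sum_congr rfl fun i _ => Finset.sum_congr rfl fun j _ => by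
      rw [symm_apply A hAsymm i j]
  have h1 : ∑ i, v i * (Matrix.diagonal (fun i => ∑ j, A i j) - A).mulVec v i
      = (∑ i, ∑ j, A i j * v i ^ 2) - ∑ i, ∑ j, A i j * (v i * v j) := by
    rw [← Finset.sum_sub_distrib]
    refine Finset.sum_congr rfl fun i _ => ?_
    simp only [Matrix.mulVec, dotProduct, Matrix.sub_apply, Matrix.diagonal_apply]
    rw [Finset.mul_sum, ← Finset.sum_sub_distrib]
    have hpart : ∑ x, v i * ((if i = x then ∑ j, A i j else 0) * v x)
        = ∑ j, A i j * v i ^ 2 := by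
      rw [Finset.sum_eq_single i]
      · rw [if_pos rfl, Finset.sum_mul, Finset.mul_sum]
        exact Finset.sum_congr rfl fun j _ => by ring
      · intro b _ hb
        rw [if_neg (Ne.symm hb)]
        ring
      · intro hb; exact absurd (Finset.mem_univ i) hb
    calc ∑ x, v i * (((if i = x then ∑ j, A i j else 0) - A i x) * v x)
        = (∑ x, v i * ((if i = x then ∑ j, A i j else 0) * v x)) - ∑ x, v i * (A i x * v x) := by
          rw [← Finset.sum_sub_distrib]
          exact Finset.sum_congr rfl fun x _ => by ring
      _ = ∑ x, (A i x * v i ^ 2 - A i x * (v i * v x)) := by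
          rw [hpart, ← Finset.sum_sub_distrib]
          exact Finset.sum_congr rfl fun x _ => by ring
  have h2 : ∑ i, ∑ j, A i j * (v i - v j)^2
      = (∑ i, ∑ j, A i j * v i ^ 2) + (∑ i, ∑ j, A i j * v j ^ 2)
        - 2 * ∑ i, ∑ j, A i j * (v i * v j) := by
    simp only [Finset.mul_sum, ← Finset.sum_add_distrib, ← Finset.sum_sub_distrib]
    refine Finset.sum_congr rfl fun i _ => Finset.sum_congr rfl fun j _ => by ring
  rw [h1, h2, hswap]
  ring

lemma lap_psd (hAsymm : A.IsSymm) (hApos : ∀ i j, 0 ≤ A i j)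
    (hL : L = Matrix.diagonal (fun i => ∑ j, A i j) - A) (v : Fin n → ℝ) :
    0 ≤ ∑ i, v i * L.mulVec v i := by
  rw [lap_quad A L hAsymm hL v]
  apply div_nonneg _ (by norm_num)
  refine Finset.sum_nonneg fun i _ => Finset.sum_nonneg fun j _ => ?_
  exact mul_nonneg (hApos i j) (sq_nonneg _)

lemma lap_upper (hAsymm : A.IsSymm) (hApos : ∀ i j, 0 ≤ A i j)
    (hL : L = Matrix.diagonal (fun i => ∑ j, A i j) - A)
    {dmax : ℝ} (hd : ∀ i, ∑ j, A i j ≤ dmax) (v : Fin n → ℝ) :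
    ∑ i, v i * L.mulVec v i ≤ 2 * dmax * ∑ i, v i ^ 2 := by
  rw [lap_quad A L hAsymm hL v]
  have step1 : ∑ i, ∑ j, A i j * (v i - v j)^2
      ≤ ∑ i, ∑ j, (2 * (A i j * v i ^ 2) + 2 * (A i j * v j ^ 2)) := by
    refine Finset.sum_le_sum fun i _ => Finset.sum_le_sum fun j _ => ?_
    nlinarith [hApos i j, sq_nonneg (v i + v j), sq_nonneg (v i - v j)]
  have hswap : ∑ i, ∑ j, A i j * v j ^ 2 = ∑ i, ∑ j, A i j * v i ^ 2 := by
    rw [Finset.sum_comm]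
    exact Finset.sum_congr rfl fun i _ => Finset.sum_congr rfl fun j _ => by
      rw [symm_apply A hAsymm i j]
  have step2 : ∑ i, ∑ j, A i j * v i ^ 2 ≤ dmax * ∑ i, v i ^ 2 := by
    rw [Finset.mul_sum]
    refine Finset.sum_le_sum fun i _ => ?_
    rw [← Finset.sum_mul]
    exact mul_le_mul_of_nonneg_right (hd i) (sq_nonneg _)
  simp only [Finset.sum_add_distrib, ← Finset.mul_sum] at step1
  rw [hswap] at step1
  linarith

-- symmetry of the bilinear form
lemma lap_bilin_symm (hAsymm : A.IsSymm)
    (hL : L = Matrix.diagonal (fun i => ∑ j, A i j) - A) (u v : Fin n → ℝ) :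
    ∑ i, u i * L.mulVec v i = ∑ i, v i * L.mulVec u i := by
  have hLsymm : ∀ i j, L i j = L j i := by
    intro i j
    subst hL
    simp only [Matrix.sub_apply, Matrix.diagonal_apply]
    rw [symm_apply A hAsymm i j]
    rcases eq_or_ne i j with rfl | hij
    · rfl
    · rw [if_neg hij, if_neg (Ne.symm hij)]
  simp only [Matrix.mulVec, dotProduct, Finset.mul_sum]
  rw [Finset.sum_comm]
  exact Finset.sum_congr rfl fun i _ => Finset.sum_congr rfl fun j _ => by
    rw [hLsymm i j]; ring

lemma lap_cs (hAsymm : A.IsSymm) (hApos : ∀ i j, 0 ≤ A i j)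
    (hL : L = Matrix.diagonal (fun i => ∑ j, A i j) - A) (u v : Fin n → ℝ) :
    (∑ i, u i * L.mulVec v i)^2
      ≤ (∑ i, u i * L.mulVec u i) * (∑ i, v i * L.mulVec v i) := by
  set Buv := ∑ i, u i * L.mulVec v i with hBuv
  set Buu := ∑ i, u i * L.mulVec u i with hBuu
  set Bvv := ∑ i, v i * L.mulVec v i with hBvv
  have key : ∀ x : ℝ, 0 ≤ Bvv * (x * x) + (2 * Buv) * x + Buu := by
    intro x
    have expand : ∑ i, (u i + x * v i) * L.mulVec (fun j => u j + x * v j) i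
        = Buu + x * (∑ i, v i * L.mulVec u i) + x * Buv + x * x * Bvv := by
      have hmv : L.mulVec (fun j => u j + x * v j) = fun i => L.mulVec u i + x * L.mulVec v i := by
        funext i
        have : (fun j => u j + x * v j) = u + x • v := by funext j; simp [Pi.smul_apply]
        rw [this, Matrix.mulVec_add, Matrix.mulVec_smul]
        simp
      rw [hmv, hBuu, hBuv, hBvv]
      simp only [Finset.mul_sum, ← Finset.sum_add_distrib]
      refine Finset.sum_congr rfl fun i _ => by ring
    have h0 := lap_psd A L hAsymm hApos hL (fun j => u j + x * v j)
    rw [expand, lap_bilin_symm A L hAsymm hL v u] at h0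
    linarith
  have := discrim_le_zero key
  rw [discrim] at this
  nlinarith

lemma lap_eq_zero (hAsymm : A.IsSymm) (hApos : ∀ i j, 0 ≤ A i j)
    (hL : L = Matrix.diagonal (fun i => ∑ j, A i j) - A) (v : Fin n → ℝ)
    (hv : ∑ i, v i * L.mulVec v i = 0) : L.mulVec v = 0 := by
  funext i
  have := lap_cs A L hAsymm hApos hL (fun k => if k = i then (1:ℝ) else 0) v
  rw [hv, mul_zero] at this
  have hs : ∑ k, (if k = i then (1:ℝ) else 0) * L.mulVec v k = L.mulVec v i := by
    rw [Finset.sum_eq_single i]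
    · simp
    · intro b _ hb; rw [if_neg hb]; ring
    · intro hb; exact absurd (Finset.mem_univ i) hb
  rw [hs] at this
  have h2 := sq_nonneg (L.mulVec v i)
  have : L.mulVec v i ^ 2 = 0 := le_antisymm this h2
  simpa [pow_eq_zero_iff] using this


lemma quad_smul (c : ℝ) (v : Fin n → ℝ) :
    ∑ i, (c • v) i * L.mulVec (c • v) i = c^2 * ∑ i, v i * L.mulVec v i := by
  rw [Matrix.mulVec_smul, Finset.mul_sum]
  exact Finset.sum_congr rfl fun i _ => by simp [Pi.smul_apply, smul_eq_mul]; ring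

lemma fiedler (hn : 0 < n) (hAsymm : A.IsSymm) (hApos : ∀ i j, 0 ≤ A i j)
    (hL : L = Matrix.diagonal (fun i => ∑ j, A i j) - A)
    (hconn : ∀ v : Fin n → ℝ, L.mulVec v = 0 → ∃ a : ℝ, v = fun _ => a) :
    ∃ μ : ℝ, 0 < μ ∧ ∀ v : Fin n → ℝ, ∑ i, v i = 0 →
      μ * ∑ i, v i ^ 2 ≤ ∑ i, v i * L.mulVec v i := by
  classical
  set S : Set (Fin n → ℝ) := {v | ∑ i, v i = 0 ∧ ∑ i, v i ^ 2 = 1} with hS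
  have hf_cont : Continuous fun v : Fin n → ℝ => ∑ i, v i * L.mulVec v i := by
    refine continuous_finset_sum _ fun i _ => ?_
    refine (continuous_apply i).mul ?_
    simp only [Matrix.mulVec, dotProduct]
    exact continuous_finset_sum _ fun j _ => continuous_const.mul (continuous_apply j)
  by_cases hSne : S.Nonempty
  · -- compactness
    have hclosed : IsClosed S := by
      apply IsClosed.inter
      · exact isClosed_eq (continuous_finset_sum _ fun i _ => continuous_apply i)
          continuous_const
      · exact isClosed_eq (continuous_finset_sum _ fun i _ =>
          (continuous_apply i).pow 2) continuous_const
    have hbdd : Bornology.IsBounded S := by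
      apply Bornology.IsBounded.subset (Metric.isBounded_closedBall (x := (0 : Fin n → ℝ)) (r := 1))
      intro v hv
      simp only [Metric.mem_closedBall, dist_zero_right]
      rw [pi_norm_le_iff_of_nonneg zero_le_one]
      intro i
      have h1 : v i ^ 2 ≤ 1 := by
        rw [← hv.2]
        exact Finset.single_le_sum (fun j _ => sq_nonneg (v j)) (Finset.mem_univ i)
      rw [Real.norm_eq_abs, ← Real.sqrt_sq_eq_abs]
      exact (Real.sqrt_le_sqrt h1).trans_eq Real.sqrt_one
    have hcompact : IsCompact S := Metric.isCompact_of_isClosed_isBounded hclosed hbdd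
    obtain ⟨v₀, hv₀S, hv₀min⟩ := hcompact.exists_isMinOn hSne hf_cont.continuousOn
    set μ := ∑ i, v₀ i * L.mulVec v₀ i with hμ
    have hμpos : 0 < μ := by
      rcases lt_or_eq_of_le (lap_psd A L hAsymm hApos hL v₀) with h | h
      · exact h
      · exfalso
        obtain ⟨a, ha⟩ := hconn v₀ (lap_eq_zero A L hAsymm hApos hL v₀ h.symm)
        have hsum := hv₀S.1
        rw [ha] at hsum
        simp only [Finset.sum_const, Finset.card_univ, Fintype.card_fin, nsmul_eq_mul] at hsum
        have ha0 : a = 0 := by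
          rcases mul_eq_zero.mp hsum with h' | h'
          · exact absurd h' (Nat.cast_ne_zero.mpr hn.ne')
          · exact h'
        have := hv₀S.2
        rw [ha, ha0] at this
        simp at this
    refine ⟨μ, hμpos, fun v hv => ?_⟩
    rcases eq_or_ne (∑ i, v i ^ 2) 0 with hz | hz
    · have : ∀ i, v i = 0 := by
        intro i
        have := (Finset.sum_eq_zero_iff_of_nonneg (fun j _ => sq_nonneg (v j))).mp hz i
          (Finset.mem_univ i)
        exact pow_eq_zero_iff (n := 2) (by norm_num) |>.mp this
      have hv0 : v = 0 := funext this
      rw [hz, hv0]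
      simp
    · have hpos : 0 < ∑ i, v i ^ 2 := lt_of_le_of_ne
        (Finset.sum_nonneg fun i _ => sq_nonneg _) (Ne.symm hz)
      set c : ℝ := (Real.sqrt (∑ i, v i ^ 2))⁻¹ with hc
      have hsq : Real.sqrt (∑ i, v i ^ 2) > 0 := Real.sqrt_pos.mpr hpos
      have hcw : (c • v) ∈ S := by
        constructor
        · simp only [Pi.smul_apply, smul_eq_mul, ← Finset.mul_sum, hv, mul_zero]
        · simp only [Pi.smul_apply, smul_eq_mul, mul_pow, ← Finset.mul_sum]
          rw [hc, ← Real.sq_sqrt hpos.le]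
          field_simp
          rw [Real.sqrt_sq (Real.sqrt_nonneg _)]
      have := hv₀min hcw
      simp only [Set.mem_setOf_eq] at this
      have hq := quad_smul L c v
      rw [hq] at this
      -- this : μ ≤ c^2 * quad v  where c^2 = 1 / ∑ v^2
      have hc2 : c^2 = (∑ i, v i ^ 2)⁻¹ := by
        rw [hc, ← Real.sq_sqrt hpos.le]
        field_simp
        rw [Real.sqrt_sq (Real.sqrt_nonneg _)]
      rw [hc2] at this
      calc μ * ∑ i, v i ^ 2 ≤ ((∑ i, v i ^ 2)⁻¹ * ∑ i, v i * L.mulVec v i) * ∑ i, v i ^ 2 :=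
            mul_le_mul_of_nonneg_right this hpos.le
        _ = ∑ i, v i * L.mulVec v i := by field_simp
  · -- S empty
    refine ⟨1, one_pos, fun v hv => ?_⟩
    by_cases hvz : v = 0
    · rw [hvz]; simp
    · exfalso
      apply hSne
      have hpos : 0 < ∑ i, v i ^ 2 := by
        rcases lt_or_eq_of_le (Finset.sum_nonneg fun i _ => sq_nonneg (v i)) with h | h
        · exact h
        · exfalso; apply hvz; funext i
          have := (Finset.sum_eq_zero_iff_of_nonneg (fun j _ => sq_nonneg (v j))).mp h.symm i
            (Finset.mem_univ i)
          exact pow_eq_zero_iff (n := 2) (by norm_num) |>.mp this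
      set c : ℝ := (Real.sqrt (∑ i, v i ^ 2))⁻¹ with hc
      refine ⟨c • v, ?_, ?_⟩
      · simp only [Pi.smul_apply, smul_eq_mul, ← Finset.mul_sum, hv, mul_zero]
      · simp only [Pi.smul_apply, smul_eq_mul, mul_pow, ← Finset.mul_sum]
        rw [hc, ← Real.sq_sqrt hpos.le]
        field_simp
        rw [Real.sqrt_sq (Real.sqrt_nonneg _)]

lemma lap_sq_le (hAsymm : A.IsSymm) (hApos : ∀ i j, 0 ≤ A i j)
    (hL : L = Matrix.diagonal (fun i => ∑ j, A i j) - A)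
    {dmax : ℝ} (hdmax0 : 0 ≤ dmax) (hd : ∀ i, ∑ j, A i j ≤ dmax) (v : Fin n → ℝ) :
    ∑ i, (L.mulVec v i) ^ 2 ≤ 2 * dmax * ∑ i, v i * L.mulVec v i := by
  set a := ∑ i, (L.mulVec v i) ^ 2 with ha
  have ha0 : 0 ≤ a := Finset.sum_nonneg fun i _ => sq_nonneg _
  have haB : a = ∑ i, v i * L.mulVec (L.mulVec v) i := by
    rw [← lap_bilin_symm A L hAsymm hL (L.mulVec v) v]
    exact Finset.sum_congr rfl fun i _ => by rw [sq]
  have hcs := lap_cs A L hAsymm hApos hL v (L.mulVec v)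
  rw [← haB] at hcs
  have hup := lap_upper A L hAsymm hApos hL hd (L.mulVec v)
  rw [← ha] at hup
  have hBnn := lap_psd A L hAsymm hApos hL v
  rcases eq_or_lt_of_le ha0 with h0 | h0
  · rw [← h0]
    positivity
  · -- a^2 ≤ B(v,v) * (2 dmax a)  so a ≤ 2 dmax B(v,v)
    have h1 : a^2 ≤ (∑ i, v i * L.mulVec v i) * (2 * dmax * a) := by
      calc a^2 ≤ (∑ i, v i * L.mulVec v i) * (∑ i, L.mulVec v i * L.mulVec (L.mulVec v) i) :=
            hcs
        _ ≤ (∑ i, v i * L.mulVec v i) * (2 * dmax * a) :=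
            mul_le_mul_of_nonneg_left hup hBnn
    nlinarith
 
lemma contraction (hAsymm : A.IsSymm) (hApos : ∀ i j, 0 ≤ A i j)
    (hL : L = Matrix.diagonal (fun i => ∑ j, A i j) - A)
    {dmax μ h : ℝ} (hdmax0 : 0 ≤ dmax) (hd : ∀ i, ∑ j, A i j ≤ dmax)
    (hh0 : 0 < h) (hhd : h * dmax < 1) (hμ : 0 < μ)
    (hμle : ∀ v : Fin n → ℝ, ∑ i, v i = 0 → μ * ∑ i, v i ^ 2 ≤ ∑ i, v i * L.mulVec v i)
    (v : Fin n → ℝ) (hv : ∑ i, v i = 0) :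
    ∑ i, (v i - h * L.mulVec v i) ^ 2
      ≤ max (1 - 2*h*(1-h*dmax)*μ) 0 * ∑ i, v i ^ 2 := by
  have hexp : ∑ i, (v i - h * L.mulVec v i) ^ 2
      = ∑ i, v i ^ 2 - 2*h*(∑ i, v i * L.mulVec v i) + h^2 * ∑ i, (L.mulVec v i)^2 := by
    simp only [Finset.mul_sum, ← Finset.sum_add_distrib, ← Finset.sum_sub_distrib]
    exact Finset.sum_congr rfl fun i _ => by ring
  have hsq := lap_sq_le A L hAsymm hApos hL hdmax0 hd v
  have hlow := hμle v hv
  have hcoef : 0 < 2*h*(1-h*dmax) := by nlinarith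
  have : ∑ i, (v i - h * L.mulVec v i) ^ 2 ≤ (1 - 2*h*(1-h*dmax)*μ) * ∑ i, v i ^ 2 := by
    rw [hexp]
    nlinarith [sq_nonneg h]
  calc ∑ i, (v i - h * L.mulVec v i) ^ 2 ≤ (1 - 2*h*(1-h*dmax)*μ) * ∑ i, v i ^ 2 := this
    _ ≤ max (1 - 2*h*(1-h*dmax)*μ) 0 * ∑ i, v i ^ 2 :=
        mul_le_mul_of_nonneg_right (le_max_left _ _)
          (Finset.sum_nonneg fun i _ => sq_nonneg _)

end LinAlg


lemma rec_tendsto_zero {ρ : ℝ} (hρ0 : 0 ≤ ρ) (hρ1 : ρ < 1) {x u : ℕ → ℝ}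
    (hx0 : ∀ k, 0 ≤ x k) (hrec : ∀ k, x (k+1) ≤ ρ * x k + u k)
    (hu : Tendsto u atTop (nhds 0)) : Tendsto x atTop (nhds 0) := by
  rw [Metric.tendsto_atTop]
  intro ε hε
  have hδ : 0 < (1 - ρ) * (ε/2) := by nlinarith
  obtain ⟨K, hK⟩ := (Metric.tendsto_atTop.mp hu) _ hδ
  have claim : ∀ m, x (K + m) ≤ ρ^m * x K + ε/2 := by
    intro m
    induction m with
    | zero => simpa using by linarith [hx0 K]
    | succ m ih =>
      have h1 := hrec (K + m)
      have h2 : |u (K + m)| < (1 - ρ) * (ε/2) := by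
        have := hK (K + m) (Nat.le_add_right _ _)
        rwa [Real.dist_eq, sub_zero] at this
      have h3 : u (K + m) < (1 - ρ) * (ε/2) := (le_abs_self _).trans_lt h2
      have h4 : x (K + (m+1)) = x ((K + m) + 1) := by ring_nf
      rw [h4]
      calc x ((K+m)+1) ≤ ρ * x (K+m) + u (K+m) := h1
        _ ≤ ρ * (ρ^m * x K + ε/2) + (1-ρ) * (ε/2) := by
            have := mul_le_mul_of_nonneg_left ih hρ0
            linarith
        _ ≤ ρ^(m+1) * x K + ε/2 := by
            have hps : ρ^(m+1) = ρ * ρ^m := by ring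
            nlinarith [pow_nonneg hρ0 m, hx0 K]
  have htp : Tendsto (fun m => ρ^m * x K) atTop (nhds 0) := by
    simpa using (tendsto_pow_atTop_nhds_zero_of_lt_one hρ0 hρ1).mul_const (x K)
  obtain ⟨M, hM⟩ := (Metric.tendsto_atTop.mp htp) (ε/2) (by linarith)
  refine ⟨K + M, fun k hk => ?_⟩
  have hkK : K ≤ k := le_trans (Nat.le_add_right _ _) hk
  have hkey := claim (k - K)
  rw [Nat.add_sub_cancel' hkK] at hkey
  have hM' : |ρ^(k-K) * x K| < ε/2 := by
    have := hM (k - K) (by omega)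
    rwa [Real.dist_eq, sub_zero] at this
  have : ρ^(k-K) * x K < ε/2 := (le_abs_self _).trans_lt hM'
  rw [Real.dist_eq, sub_zero, abs_of_nonneg (hx0 k)]
  linarith

noncomputable def enorm2 {n : ℕ} (v : Fin n → ℝ) : ℝ := Real.sqrt (∑ i, v i ^ 2)

lemma enorm_nonneg {n : ℕ} (v : Fin n → ℝ) : 0 ≤ enorm2 v := Real.sqrt_nonneg _

lemma enorm_sq {n : ℕ} (v : Fin n → ℝ) : enorm2 v ^ 2 = ∑ i, v i ^ 2 :=
  Real.sq_sqrt (Finset.sum_nonneg fun i _ => sq_nonneg _)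

lemma abs_le_enorm {n : ℕ} (v : Fin n → ℝ) (i : Fin n) : |v i| ≤ enorm2 v := by
  rw [enorm2, ← Real.sqrt_sq_eq_abs]
  exact Real.sqrt_le_sqrt (Finset.single_le_sum (fun j _ => sq_nonneg (v j)) (Finset.mem_univ i))

lemma enorm2_add_le {n : ℕ} (u v : Fin n → ℝ) : enorm2 (u + v) ≤ enorm2 u + enorm2 v := by
  have hcs : ∑ i, u i * v i ≤ enorm2 u * enorm2 v := by
    have h := Finset.sum_mul_sq_le_sq_mul_sq Finset.univ u v
    calc ∑ i, u i * v i ≤ |∑ i, u i * v i| := le_abs_self _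
      _ = Real.sqrt ((∑ i, u i * v i)^2) := (Real.sqrt_sq_eq_abs _).symm
      _ ≤ Real.sqrt ((∑ i, u i ^2) * ∑ i, v i ^2) := Real.sqrt_le_sqrt h
      _ = enorm2 u * enorm2 v := by
          rw [Real.sqrt_mul (Finset.sum_nonneg fun i _ => sq_nonneg _)]
          rfl
  rw [enorm2]
  have hexp : ∑ i, (u + v) i ^ 2 ≤ (enorm2 u + enorm2 v)^2 := by
    have h1 : ∑ i, (u + v) i ^ 2 = ∑ i, u i ^2 + 2 * ∑ i, u i * v i + ∑ i, v i ^2 := by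
      simp only [Pi.add_apply, Finset.mul_sum, ← Finset.sum_add_distrib]
      exact Finset.sum_congr rfl fun i _ => by ring
    have h2 : (enorm2 u + enorm2 v)^2 = ∑ i, u i ^2 + 2 * (enorm2 u * enorm2 v) + ∑ i, v i ^2 := by
      rw [add_sq, enorm_sq, enorm_sq]
      ring
    rw [h1, h2]
    linarith
  calc Real.sqrt (∑ i, (u+v) i ^2) ≤ Real.sqrt ((enorm2 u + enorm2 v)^2) :=
        Real.sqrt_le_sqrt hexp
    _ = enorm2 u + enorm2 v := by
        rw [Real.sqrt_sq (add_nonneg (enorm_nonneg u) (enorm_nonneg v))]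

lemma enorm_le_of_bound {n : ℕ} (v : Fin n → ℝ) {M : ℝ} (hM : 0 ≤ M)
    (hb : ∀ i, |v i| ≤ M) : enorm2 v ≤ Real.sqrt n * M := by
  rw [enorm2, ← Real.sqrt_sq hM, ← Real.sqrt_mul (Nat.cast_nonneg n)]
  apply Real.sqrt_le_sqrt
  calc ∑ i, v i ^ 2 ≤ ∑ _i : Fin n, M^2 := by
        refine Finset.sum_le_sum fun i _ => ?_
        rw [← sq_abs]
        exact pow_le_pow_left₀ (abs_nonneg _) (hb i) 2
    _ = n * M^2 := by simp [Finset.sum_const, Finset.card_univ, nsmul_eq_mul]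

set_option maxHeartbeats 1000000 in
theorem det_conv {n : ℕ} (hn : 0 < n)
    (A : Matrix (Fin n) (Fin n) ℝ) (hAsymm : A.IsSymm) (hApos : ∀ i j, 0 ≤ A i j)
    (L : Matrix (Fin n) (Fin n) ℝ)
    (hL : L = Matrix.diagonal (fun i => ∑ j, A i j) - A)
    (hconn : ∀ v : Fin n → ℝ, L.mulVec v = 0 → ∃ a : ℝ, v = fun _ => a)
    (h : ℝ) (hh0 : 0 < h)
    (hh1 : h < 1 / Finset.univ.sup'
      (Finset.univ_nonempty_iff.mpr (Fin.pos_iff_nonempty.mp hn)) (fun i => ∑ j, A i j))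
    (s : Fin n → ℝ)
    (η : ℕ → Fin n → ℝ) (r : Fin n → ℝ) (hr0 : ∀ i, 0 ≤ r i) (hr1 : ∀ i, r i < 1)
    (hb : ∀ i, ∀ᶠ k in atTop, |η k i| ≤ r i ^ k) (θ0 : Fin n → ℝ) :
    (∀ i, Summable fun j => η j i) ∧
      Tendsto (fun k => thetaSeq L (Matrix.diagonal s) h θ0 η k)
        atTop (nhds (fun _ => thetaInf θ0 s η)) := by
  have hn' : (n : ℝ) ≠ 0 := Nat.cast_ne_zero.mpr hn.ne'
  -- summability
  have hsum : ∀ i, Summable fun j => η j i := by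
    intro i
    obtain ⟨K, hK⟩ := (eventually_atTop.mp (hb i))
    rw [← summable_nat_add_iff K]
    apply Summable.of_abs
    refine Summable.of_nonneg_of_le (fun k => abs_nonneg _) (fun k => ?_)
      ((summable_geometric_of_lt_one (hr0 i) (hr1 i)).mul_left (r i ^ K))
    have := hK (k + K) (Nat.le_add_left _ _)
    calc |η (k + K) i| ≤ r i ^ (k + K) := this
      _ = r i ^ K * r i ^ k := by rw [pow_add]; ring
  refine ⟨hsum, ?_⟩
  -- noise tends to zero
  have hη0 : ∀ i, Tendsto (fun k => η k i) atTop (nhds 0) := by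
    intro i
    exact squeeze_zero_norm' (by simpa using hb i)
      (tendsto_pow_atTop_nhds_zero_of_lt_one (hr0 i) (hr1 i))
  -- degree bound facts
  set dmax := Finset.univ.sup'
      (Finset.univ_nonempty_iff.mpr (Fin.pos_iff_nonempty.mp hn)) (fun i => ∑ j, A i j) with hdmax
  have hd : ∀ i, ∑ j, A i j ≤ dmax :=
    fun i => Finset.le_sup' (fun i => ∑ j, A i j) (Finset.mem_univ i)
  have hdmax0 : 0 < dmax := one_div_pos.mp (lt_trans hh0 hh1)
  have hhd : h * dmax < 1 := by
    rw [lt_div_iff₀ hdmax0] at hh1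
    simpa using hh1
  obtain ⟨μ, hμ0, hμle⟩ := fiedler A L hn hAsymm hApos hL hconn
  set ρsq : ℝ := max (1 - 2*h*(1-h*dmax)*μ) 0 with hρsq
  have hρsq0 : 0 ≤ ρsq := le_max_right _ _
  have hρsq1 : ρsq < 1 := by
    apply max_lt _ one_pos
    nlinarith [mul_pos (mul_pos (by linarith : (0:ℝ) < 2*h)
      (by linarith : (0:ℝ) < 1 - h*dmax)) hμ0]
  set ρ : ℝ := Real.sqrt ρsq with hρ
  have hρ0 : 0 ≤ ρ := Real.sqrt_nonneg _
  have hρ1 : ρ < 1 := by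
    rw [hρ, show (1:ℝ) = Real.sqrt 1 by rw [Real.sqrt_one]]
    exact Real.sqrt_lt_sqrt hρsq0 hρsq1
  -- Laplacian kernel facts
  have hrow : ∀ i, ∑ j, L i j = 0 := by
    intro i
    subst hL
    simp only [Matrix.sub_apply, Matrix.diagonal_apply, Finset.sum_sub_distrib,
      Finset.sum_ite_eq, Finset.mem_univ, if_true]
    ring
  have hLsymm : ∀ i j, L i j = L j i := by
    intro i j
    subst hL
    simp only [Matrix.sub_apply, Matrix.diagonal_apply]
    rw [show A i j = A j i from (symm_apply A hAsymm j i)]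
    rcases eq_or_ne i j with rfl | hij
    · rfl
    · rw [if_neg hij, if_neg (Ne.symm hij)]
  have hL1 : ∀ a : ℝ, L.mulVec (fun _ => a) = 0 := by
    intro a
    funext i
    simp only [Matrix.mulVec, dotProduct, Pi.zero_apply]
    rw [show ∑ j, L i j * a = (∑ j, L i j) * a from (Finset.sum_mul _ _ _).symm, hrow i,
      zero_mul]
  have hcol : ∀ x : Fin n → ℝ, ∑ i, L.mulVec x i = 0 := by
    intro x
    simp only [Matrix.mulVec, dotProduct]
    rw [Finset.sum_comm]
    apply Finset.sum_eq_zero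
    intro j _
    rw [show ∑ i, L i j * x j = (∑ i, L i j) * x j from (Finset.sum_mul _ _ _).symm]
    rw [show ∑ i, L i j = ∑ i, L j i from Finset.sum_congr rfl fun i _ => hLsymm i j, hrow j,
      zero_mul]
  -- trajectory abbreviations
  set θf := thetaSeq L (Matrix.diagonal s) h θ0 η with hθf
  have hstep : ∀ k, θf (k+1) = θf k - h • L.mulVec (θf k + η k)
      + (Matrix.diagonal s).mulVec (η k) := fun k => rfl
  set g : ℕ → ℝ := fun k => (∑ i, s i * η k i) / n with hg
  set avg : ℕ → ℝ := fun k => ave (θf k) with havgdef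
  have havg : ∀ k, avg (k+1) = avg k + g k := by
    intro k
    simp only [havgdef, ave, hstep k, Pi.add_apply, Pi.sub_apply, Pi.smul_apply, smul_eq_mul]
    rw [Finset.sum_add_distrib, Finset.sum_sub_distrib, ← Finset.mul_sum, hcol, mul_zero,
      sub_zero]
    have : ∑ i, (Matrix.diagonal s).mulVec (η k) i = ∑ i, s i * η k i := by
      exact Finset.sum_congr rfl fun i _ => Matrix.mulVec_diagonal _ _ _
    rw [this, add_div]
  have havg_eq : ∀ k, avg k = ave θ0 + ∑ j ∈ Finset.range k, g j := by
    intro k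
    induction k with
    | zero => simp [havgdef]; rfl
    | succ k ih => rw [havg k, ih, Finset.sum_range_succ]; ring
  -- limit of the average
  have hgsum : Summable g := by
    have : Summable fun k => ∑ i, (s i * η k i) / n := by
      apply summable_sum
      intro i _
      exact ((hsum i).mul_left (s i)).div_const _
    apply this.congr
    intro k
    simp only [hg]
    rw [Finset.sum_div]
  have htsum : ∑' k, g k = ∑ i, (s i / n) * ∑' j, η j i := by
    have h1 : ∀ k, g k = ∑ i, (s i / n) * η k i := by
      intro k
      simp only [hg]
      rw [Finset.sum_div]
      exact Finset.sum_congr rfl fun i _ => by ring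
    rw [show g = fun k => ∑ i, (s i / n) * η k i from funext h1]
    rw [Summable.tsum_finsetSum (fun i _ => (hsum i).mul_left _)]
    exact Finset.sum_congr rfl fun i _ => tsum_mul_left
  have hinf : thetaInf θ0 s η = ave θ0 + ∑' k, g k := by
    rw [thetaInf, if_pos hsum, htsum]
  have havglim : Tendsto avg atTop (nhds (thetaInf θ0 s η)) := by
    rw [hinf]
    rw [show avg = fun k => ave θ0 + ∑ j ∈ Finset.range k, g j from funext havg_eq]
    exact tendsto_const_nhds.add hgsum.hasSum.tendsto_sum_nat
  -- disagreement vector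
  set δ : ℕ → Fin n → ℝ := fun k i => θf k i - avg k with hδ
  have hδsum0 : ∀ k, ∑ i, δ k i = 0 := by
    intro k
    simp only [hδ, Finset.sum_sub_distrib, Finset.sum_const, Finset.card_univ,
      Fintype.card_fin, nsmul_eq_mul]
    have hna : (n:ℝ) * avg k = ∑ i, θf k i := by
      simp only [havgdef, ave]
      field_simp
    linarith [hna]
  set w : ℕ → Fin n → ℝ := fun k i => s i * η k i - h * L.mulVec (η k) i - g k with hw
  have hδrec : ∀ k, δ (k+1) = (fun i => δ k i - h * L.mulVec (δ k) i) + w k := by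
    intro k
    funext i
    have hLθ : L.mulVec (θf k) i = L.mulVec (δ k) i := by
      have : θf k = (fun j => δ k j + avg k) := by
        funext j; simp [hδ]
      rw [this]
      have : (fun j => δ k j + avg k) = (δ k) + (fun _ => avg k) := rfl
      rw [this, Matrix.mulVec_add, Pi.add_apply, hL1, Pi.zero_apply, add_zero]
    simp only [hδ, hstep k, Pi.add_apply, Pi.sub_apply, Pi.smul_apply, smul_eq_mul, hw,
      havg k, Matrix.mulVec_add, Matrix.mulVec_diagonal]
    rw [← hLθ]  -- adjust
    ring
  -- norms
  set x : ℕ → ℝ := fun k => enorm2 (δ k) with hx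
  set u : ℕ → ℝ := fun k => enorm2 (w k) with hu
  have hxrec : ∀ k, x (k+1) ≤ ρ * x k + u k := by
    intro k
    rw [hx]
    calc enorm2 (δ (k+1)) = enorm2 ((fun i => δ k i - h * L.mulVec (δ k) i) + w k) := by
          rw [hδrec k]
      _ ≤ enorm2 (fun i => δ k i - h * L.mulVec (δ k) i) + enorm2 (w k) := enorm2_add_le _ _
      _ ≤ ρ * x k + u k := by
          apply add_le_add_left
          have hcontr := contraction A L hAsymm hApos hL hdmax0.le hd hh0 hhd hμ0 hμle
            (δ k) (hδsum0 k)
          have : enorm2 (fun i => δ k i - h * L.mulVec (δ k) i)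
              = Real.sqrt (∑ i, (δ k i - h * L.mulVec (δ k) i)^2) := rfl
          rw [this]
          calc Real.sqrt (∑ i, (δ k i - h * L.mulVec (δ k) i)^2)
              ≤ Real.sqrt (ρsq * ∑ i, δ k i ^ 2) := Real.sqrt_le_sqrt hcontr
            _ = ρ * x k := by
                rw [Real.sqrt_mul hρsq0, hρ, hx]
                rfl
  have hu0 : Tendsto u atTop (nhds 0) := by
    have hwi : ∀ i, Tendsto (fun k => w k i) atTop (nhds 0) := by
      intro i
      have h1 : Tendsto (fun k => s i * η k i) atTop (nhds 0) := by
        simpa using (hη0 i).const_mul (s i)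
      have h2 : Tendsto (fun k => h * L.mulVec (η k) i) atTop (nhds 0) := by
        have : Tendsto (fun k => L.mulVec (η k) i) atTop (nhds 0) := by
          have : ∀ k, L.mulVec (η k) i = ∑ j, L i j * η k j := fun k => rfl
          rw [show (fun k => L.mulVec (η k) i) = fun k => ∑ j, L i j * η k j from
            funext this]
          have := tendsto_finset_sum (Finset.univ : Finset (Fin n))
            (f := fun j k => L i j * η k j) (fun j _ => by simpa using (hη0 j).const_mul (L i j))
          simpa using this
        simpa using this.const_mul h
      have h3 : Tendsto g atTop (nhds 0) := by
        have := tendsto_finset_sum (Finset.univ : Finset (Fin n))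
          (f := fun i k => s i * η k i) (fun i _ => by simpa using (hη0 i).const_mul (s i))
        have h4 := this.div_const (n : ℝ)
        simpa using h4
      have := (h1.sub h2).sub h3
      simpa using this
    have hsq : Tendsto (fun k => ∑ i, w k i ^ 2) atTop (nhds 0) := by
      have := tendsto_finset_sum (Finset.univ : Finset (Fin n))
        (f := fun i k => w k i ^ 2) (fun i _ => by
          have := (hwi i).mul (hwi i)
          simpa [sq] using this)
      simpa using this
    have := (Real.continuous_sqrt.tendsto' 0 0 Real.sqrt_zero).comp hsq
    exact this
  have hx0 : Tendsto x atTop (nhds 0) :=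
    rec_tendsto_zero hρ0 hρ1 (fun k => enorm_nonneg _) hxrec hu0
  -- conclude
  rw [tendsto_pi_nhds]
  intro i
  have hδi : Tendsto (fun k => δ k i) atTop (nhds 0) := by
    apply squeeze_zero_norm (fun k => abs_le_enorm (δ k) i) hx0
  have : Tendsto (fun k => δ k i + avg k) atTop (nhds (0 + thetaInf θ0 s η)) :=
    hδi.add havglim
  rw [zero_add] at this
  apply this.congr
  intro k
  simp [hδ]

/-- **Almost sure convergence of the differentially private Laplacian consensus
algorithm.** Almost surely every series `∑_{j=0}^∞ η_i(j)` converges (so that `θ_∞`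
is well defined a.s.), and almost surely `θ(k) → θ_∞ 𝟏` as `k → ∞`. -/
theorem almost_sure_convergence {n : ℕ} (hn : 0 < n)
    (A : Matrix (Fin n) (Fin n) ℝ) (hAsymm : A.IsSymm) (hApos : ∀ i j, 0 ≤ A i j)
    (L : Matrix (Fin n) (Fin n) ℝ)
    (hL : L = Matrix.diagonal (fun i => ∑ j, A i j) - A)
    (hconn : ∀ v : Fin n → ℝ, L.mulVec v = 0 → ∃ a : ℝ, v = fun _ => a)
    (h : ℝ) (hh0 : 0 < h)
    (hh1 : h < 1 / Finset.univ.sup'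
      (Finset.univ_nonempty_iff.mpr (Fin.pos_iff_nonempty.mp hn)) (fun i => ∑ j, A i j))
    (s c q : Fin n → ℝ) (hs : ∀ i, s i ∈ Set.Ioo (0 : ℝ) 2)
    (hc : ∀ i, 0 < c i) (hq : ∀ i, q i ∈ Set.Ioo (|s i - 1|) 1)
    (P : Measure (ℕ → Fin n → ℝ)) [IsProbabilityMeasure P]
    (hlaw : ∀ (k : ℕ) (i : Fin n),
      Measure.map (fun ω : ℕ → Fin n → ℝ => ω k i) P = lap (c i * q i ^ k))
    (hind : iIndepFun
      (fun (p : ℕ × Fin n) (ω : ℕ → Fin n → ℝ) => ω p.1 p.2) P)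
    (θ0 : Fin n → ℝ) :
    P {ω | ∀ i, Summable fun j => ω j i} = 1 ∧
    ∀ᵐ ω ∂P, Tendsto (fun k => thetaSeq L (Matrix.diagonal s) h θ0 ω k)
      atTop (nhds (fun _ => thetaInf θ0 s ω)) := by
  -- the modified decay rates
  set r : Fin n → ℝ := fun i => (1 + q i)/2 with hr
  have hq0 : ∀ i, 0 < q i := fun i => lt_of_le_of_lt (abs_nonneg _) (hq i).1
  have hq1 : ∀ i, q i < 1 := fun i => (hq i).2
  have hqr : ∀ i, q i < r i := fun i => by rw [hr]; dsimp only; linarith [hq1 i]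
  have hr0 : ∀ i, 0 < r i := fun i => lt_trans (hq0 i) (hqr i)
  have hr1 : ∀ i, r i < 1 := fun i => by rw [hr]; dsimp only; linarith [hq1 i]
  -- Borel–Cantelli for each agent
  have hBC : ∀ i : Fin n, ∀ᵐ ω ∂P, ∀ᶠ k in atTop, |ω k i| ≤ r i ^ k := by
    intro i
    set E : ℕ → Set (ℕ → Fin n → ℝ) := fun k => {ω | r i ^ k < |ω k i|} with hE
    have hmeas : ∀ k, MeasurableSet (E k) := by
      intro k
      have : E k = (fun ω : ℕ → Fin n → ℝ => ω k i) ⁻¹' {x | r i ^ k < |x|} := rfl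
      rw [this]
      exact ((measurable_pi_apply i).comp (measurable_pi_apply k))
        (measurableSet_lt measurable_const measurable_abs)
    have hP : ∀ k, P (E k) ≤ ENNReal.ofReal (c i * (q i / r i)^k) := by
      intro k
      have hb : 0 < c i * q i ^ k := mul_pos (hc i) (pow_pos (hq0 i) k)
      have hEmap : P (E k) = lap (c i * q i ^ k) {x | r i ^ k < |x|} := by
        have hm : Measurable (fun ω : ℕ → Fin n → ℝ => ω k i) :=
          (measurable_pi_apply i).comp (measurable_pi_apply k)
        rw [← hlaw k i, Measure.map_apply hm
          (measurableSet_lt measurable_const measurable_abs)]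
        rfl
      rw [hEmap]
      calc lap (c i * q i ^ k) {x | r i ^ k < |x|}
          ≤ ENNReal.ofReal (Real.exp (-(r i ^ k) / (c i * q i ^ k))) :=
            lap_tail hb (pow_nonneg (hr0 i).le k)
        _ ≤ ENNReal.ofReal (c i * (q i / r i)^k) := by
            apply ENNReal.ofReal_le_ofReal
            have hx : 0 < r i ^ k / (c i * q i ^ k) :=
              div_pos (pow_pos (hr0 i) k) hb
            have hxe : r i ^ k / (c i * q i ^ k) ≤ Real.exp (r i ^ k / (c i * q i ^ k)) := by
              linarith [Real.add_one_le_exp (r i ^ k / (c i * q i ^ k))]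
            calc Real.exp (-(r i ^ k) / (c i * q i ^ k))
                = (Real.exp (r i ^ k / (c i * q i ^ k)))⁻¹ := by
                  rw [← Real.exp_neg, neg_div]
              _ ≤ (r i ^ k / (c i * q i ^ k))⁻¹ := by
                  exact inv_anti₀ hx hxe
              _ = c i * (q i / r i)^k := by
                  rw [inv_div, mul_div_assoc, ← div_pow]
    have hqr1 : q i / r i < 1 := (div_lt_one (hr0 i)).mpr (hqr i)
    have hqr0 : 0 ≤ q i / r i := le_of_lt (div_pos (hq0 i) (hr0 i))
    have hfin : ∑' k, P (E k) ≠ ⊤ := by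
      have hle : ∑' k, P (E k) ≤ ∑' k, ENNReal.ofReal (c i * (q i / r i)^k) :=
        ENNReal.tsum_le_tsum hP
      have heq : ∑' k, ENNReal.ofReal (c i * (q i / r i)^k)
          = ENNReal.ofReal (∑' k, c i * (q i / r i)^k) :=
        (ENNReal.ofReal_tsum_of_nonneg (fun k => mul_nonneg (hc i).le (pow_nonneg hqr0 k))
          ((summable_geometric_of_lt_one hqr0 hqr1).mul_left _)).symm
      rw [heq] at hle
      exact (lt_of_le_of_lt hle ENNReal.ofReal_lt_top).ne
    filter_upwards [ae_eventually_notMem hfin] with ω hω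
    exact hω.mono (fun k hk => not_lt.mp hk)
  have hae : ∀ᵐ ω ∂P, ∀ i, ∀ᶠ k in atTop, |ω k i| ≤ r i ^ k := ae_all_iff.mpr hBC
  have hgood : ∀ᵐ ω ∂P, (∀ i, Summable fun j => ω j i) ∧
      Tendsto (fun k => thetaSeq L (Matrix.diagonal s) h θ0 ω k)
        atTop (nhds (fun _ => thetaInf θ0 s ω)) :=
    hae.mono (fun ω hω => det_conv hn A hAsymm hApos L hL hconn h hh0 hh1 s ω r
      (fun i => (hr0 i).le) hr1 hω θ0)
  constructor
  · have h1 : ∀ᵐ ω ∂P, ω ∈ {ω : ℕ → Fin n → ℝ | ∀ i, Summable fun j => ω j i} :=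
      hgood.mono fun ω hω => hω.1
    have h0 : P {ω : ℕ → Fin n → ℝ | ¬ ∀ i, Summable fun j => ω j i} = 0 := by
      have := ae_iff.mp h1
      simpa using this
    refine le_antisymm prob_le_one ?_
    calc (1:ENNReal) = P Set.univ := measure_univ.symm
      _ ≤ P ({ω : ℕ → Fin n → ℝ | ∀ i, Summable fun j => ω j i}
            ∪ {ω : ℕ → Fin n → ℝ | ¬ ∀ i, Summable fun j => ω j i}) := by
          apply measure_mono
          intro ω _
          by_cases hω : ∀ i, Summable fun j => ω j i
          · exact Or.inl hω
          · exact Or.inr hω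
      _ ≤ P {ω : ℕ → Fin n → ℝ | ∀ i, Summable fun j => ω j i}
            + P {ω : ℕ → Fin n → ℝ | ¬ ∀ i, Summable fun j => ω j i} := measure_union_le _ _
      _ = P {ω : ℕ → Fin n → ℝ | ∀ i, Summable fun j => ω j i} := by rw [h0, add_zero]
  · exact hgood.mono fun ω hω => hω.2
end

section
/- Unbiasedness and variance of the consensus value: Under the differentially private Laplacian consensus dynamics with the stated assumptions, the convergence point θ_∞ = ⟨θ₀⟩ + Σ_{i=1}^n (s_i/n) Σ_{j=0}^∞ η_i(j) satisfies E[θ_∞] = ⟨θ₀⟩ and var{θ_∞} = (2/n²) Σ_{i=1}^n s_i² c_i² / (1 − q_i²). -/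
open MeasureTheory ProbabilityTheory Filter

open Real Set
open scoped ENNReal NNReal Topology

lemma lapAux.density_meas (b : ℝ) :
    Measurable fun x : ℝ => (2 * b)⁻¹ * Real.exp (-|x| / b) :=
  (continuous_const.mul (((continuous_abs.neg).div_const b).rexp)).measurable

lemma lapAux.integrableOn_pow (hb : 0 < (b : ℝ)) (k : ℕ) :
    IntegrableOn (fun x : ℝ => x ^ k * Real.exp (-x / b)) (Set.Ioi 0) := by
  have h := integrableOn_rpow_mul_exp_neg_mul_rpow (p := 1) (s := (k : ℝ)) (b := b⁻¹)
    ((by norm_num : (-1:ℝ) < 0).trans_le (Nat.cast_nonneg k)) one_pos (inv_pos.2 hb)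
  refine h.congr_fun (fun x hx => ?_) measurableSet_Ioi
  simp only [Real.rpow_natCast, Real.rpow_one]
  ring_nf

lemma lapAux.integrable_abs_pow (hb : 0 < (b : ℝ)) (k : ℕ) :
    Integrable (fun x : ℝ => |x| ^ k * Real.exp (-|x| / b)) := by
  have hIoi : IntegrableOn (fun x : ℝ => |x| ^ k * Real.exp (-|x| / b)) (Set.Ioi 0) :=
    (lapAux.integrableOn_pow hb k).congr_fun
      (fun x hx => by rw [abs_of_pos (by exact hx)]) measurableSet_Ioi
  have hIic : IntegrableOn (fun x : ℝ => |x| ^ k * Real.exp (-|x| / b)) (Set.Iic 0) := by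
    have m : MeasurableEmbedding fun x : ℝ => -x := (Homeomorph.neg ℝ).measurableEmbedding
    rw [← Measure.map_neg_eq_self (volume : Measure ℝ), m.integrableOn_map_iff]
    simp only [Function.comp_def, abs_neg, neg_preimage, neg_Iic, neg_zero]
    exact Iff.mpr integrableOn_Ici_iff_integrableOn_Ioi hIoi
  rw [← integrableOn_univ, ← Set.Iic_union_Ioi (a := (0:ℝ))]
  exact hIic.union hIoi

lemma lapAux.integral_abs_pow (hb : 0 < (b : ℝ)) (k : ℕ) :
    ∫ x : ℝ, |x| ^ k * Real.exp (-|x| / b) = 2 * (b ^ (k + 1) * (k.factorial : ℝ)) := by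
  have h1 : (∫ x : ℝ, |x| ^ k * Real.exp (-|x| / b))
      = ∫ x : ℝ, (fun t : ℝ => t ^ k * Real.exp (-t / b)) |x| := rfl
  rw [h1, integral_comp_abs (f := fun t : ℝ => t ^ k * Real.exp (-t / b))]
  have h2 : ∫ t : ℝ in Set.Ioi 0, t ^ k * Real.exp (-t / b) = b ^ (k + 1) * (k.factorial : ℝ) := by
    have h := Real.integral_rpow_mul_exp_neg_mul_Ioi (a := (k : ℝ) + 1) (r := b⁻¹)
      (by positivity) (inv_pos.2 hb)
    rw [setIntegral_congr_fun measurableSet_Ioi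
      (g := fun t : ℝ => t ^ ((k : ℝ) + 1 - 1) * Real.exp (-(b⁻¹ * t)))
      (fun x hx => by simp only [add_sub_cancel_right, Real.rpow_natCast]; ring_nf), h,
      one_div, inv_inv, Real.Gamma_nat_eq_factorial,
      show ((k : ℝ) + 1) = ((k + 1 : ℕ) : ℝ) by push_cast; ring, Real.rpow_natCast]
  rw [h2]

lemma lap_isProbabilityMeasure (hb : 0 < (b : ℝ)) : IsProbabilityMeasure (lap b) := by
  constructor
  rw [lap, withDensity_apply _ MeasurableSet.univ, setLIntegral_univ,
    ← MeasureTheory.ofReal_integral_eq_lintegral_ofReal]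
  · have : ∫ x : ℝ, (2 * b)⁻¹ * Real.exp (-|x| / b)
        = (2 * b)⁻¹ * ∫ x : ℝ, |x| ^ 0 * Real.exp (-|x| / b) := by
      rw [integral_const_mul]; congr 1; apply integral_congr_ae
      exact Filter.Eventually.of_forall fun x => by simp
    rw [this, lapAux.integral_abs_pow hb 0]
    have : (2 * b)⁻¹ * (2 * (b ^ (0 + 1) * ((0).factorial : ℝ))) = 1 := by
      rw [pow_one]; norm_num; field_simp
    rw [this, ENNReal.ofReal_one]
  · have := (lapAux.integrable_abs_pow hb 0).const_mul (2 * b)⁻¹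
    refine this.congr (Filter.Eventually.of_forall fun x => ?_)
    simp [pow_zero, one_mul]
  · exact Filter.Eventually.of_forall fun x => by positivity

lemma lapAux.integral_eq {b : ℝ} (hb : 0 < b) (f : ℝ → ℝ) :
    ∫ x, f x ∂(lap b) = ∫ x, ((2 * b)⁻¹ * Real.exp (-|x| / b)) * f x := by
  have hm : Measurable fun x : ℝ => ((2 * b)⁻¹ * Real.exp (-|x| / b)).toNNReal :=
    (lapAux.density_meas b).real_toNNReal
  have h0 : (fun x : ℝ => ENNReal.ofReal ((2 * b)⁻¹ * Real.exp (-|x| / b)))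
      = fun x => (((2 * b)⁻¹ * Real.exp (-|x| / b)).toNNReal : ℝ≥0∞) := rfl
  rw [lap, h0, integral_withDensity_eq_integral_smul hm f]
  apply integral_congr_ae; refine .of_forall fun x => ?_
  show ((2 * b)⁻¹ * Real.exp (-|x| / b)).toNNReal • f x = _
  rw [NNReal.smul_def, Real.coe_toNNReal _ (by positivity), smul_eq_mul]

lemma lapAux.integral_id {b : ℝ} (hb : 0 < b) : ∫ x, x ∂(lap b) = 0 := by
  rw [lapAux.integral_eq hb]
  set g := fun x : ℝ => ((2 * b)⁻¹ * Real.exp (-|x| / b)) * x with hg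
  have key : ∫ x, g (-x) = ∫ x, g x := by
    have m : MeasurableEmbedding fun x : ℝ => -x := (Homeomorph.neg ℝ).measurableEmbedding
    conv_rhs => rw [← Measure.map_neg_eq_self (volume : Measure ℝ)]
    rw [show (Neg.neg : ℝ → ℝ) = fun x : ℝ => -x from rfl, m.integral_map]
  have hodd : ∀ x, g (-x) = -g x := fun x => by simp only [hg, abs_neg]; ring
  have h2 : ∫ x, g (-x) = - ∫ x, g x := by simp only [hodd]; exact integral_neg g
  have := key.symm.trans h2
  linarith

lemma lapAux.integral_sq {b : ℝ} (hb : 0 < b) : ∫ x, x ^ 2 ∂(lap b) = 2 * b ^ 2 := by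
  rw [lapAux.integral_eq hb]
  have h : ∀ x : ℝ, ((2 * b)⁻¹ * Real.exp (-|x| / b)) * x ^ 2
      = (2 * b)⁻¹ * (|x| ^ 2 * Real.exp (-|x| / b)) := fun x => by rw [← sq_abs]; ring
  rw [integral_congr_ae (.of_forall h), integral_const_mul, lapAux.integral_abs_pow hb 2]
  have : (Nat.factorial 2 : ℝ) = 2 := by norm_num [Nat.factorial]
  rw [this]
  field_simp

lemma lapAux.memLp_id {b : ℝ} (hb : 0 < b) : MemLp (id : ℝ → ℝ) 2 (lap b) := by
  rw [memLp_two_iff_integrable_sq aestronglyMeasurable_id]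
  rw [lap, integrable_withDensity_iff ((lapAux.density_meas b).ennreal_ofReal)
    (Filter.Eventually.of_forall fun x => ENNReal.ofReal_lt_top)]
  have := (lapAux.integrable_abs_pow hb 2).const_mul (2 * b)⁻¹
  refine this.congr (Filter.Eventually.of_forall fun x => ?_)
  show _ = id x ^ 2 * (ENNReal.ofReal ((2 * b)⁻¹ * rexp (-|x| / b))).toReal
  rw [ENNReal.toReal_ofReal (by positivity)]
  rw [id_eq, ← sq_abs x]
  ring

lemma lapAux.eLpNorm_le {α : Type*} [MeasurableSpace α] {μ : Measure α} {X : α → ℝ} {b : ℝ}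
    (hb : 0 < b) (hX : MemLp X 2 μ) (hsq : ∫ a, X a ^ 2 ∂μ = 2 * b ^ 2) :
    eLpNorm X 2 μ ≤ ENNReal.ofReal (2 * b) := by
  rw [hX.eLpNorm_eq_integral_rpow_norm two_ne_zero ENNReal.ofNat_ne_top]
  apply ENNReal.ofReal_le_ofReal
  have he : ∫ a, ‖X a‖ ^ (2 : ℝ≥0∞).toReal ∂μ = 2 * b ^ 2 := by
    rw [← hsq]
    apply integral_congr_ae; refine .of_forall fun a => ?_
    show ‖X a‖ ^ (2 : ℝ≥0∞).toReal = X a ^ 2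
    rw [ENNReal.toReal_ofNat, show (2:ℝ) = ((2:ℕ):ℝ) by norm_num, Real.rpow_natCast,
      Real.norm_eq_abs, sq_abs]
  rw [he]
  have h1 : ((2 : ℝ≥0∞).toReal)⁻¹ = (2 : ℝ)⁻¹ := by norm_num
  rw [h1]
  have h2 : (2 * b ^ 2) ≤ (2 * b) ^ 2 := by nlinarith
  calc (2 * b ^ 2) ^ (2 : ℝ)⁻¹ ≤ ((2 * b) ^ 2) ^ (2 : ℝ)⁻¹ :=
        Real.rpow_le_rpow (by positivity) h2 (by norm_num)
    _ = 2 * b := by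
        rw [← Real.rpow_natCast (2 * b) 2, ← Real.rpow_mul (by positivity)]
        norm_num

lemma varianceAux.congr_ae {Ω : Type*} [MeasurableSpace Ω] {μ : Measure Ω} {X Y : Ω → ℝ}
    (h : X =ᵐ[μ] Y) : variance X μ = variance Y μ := by
  unfold ProbabilityTheory.variance ProbabilityTheory.evariance
  rw [integral_congr_ae h]
  congr 1
  apply lintegral_congr_ae
  filter_upwards [h] with ω hω
  rw [hω]

lemma varianceAux.const_add {Ω : Type*} [MeasurableSpace Ω] {μ : Measure Ω}
    [IsProbabilityMeasure μ] {X : Ω → ℝ} (hX : Integrable X μ) (k : ℝ) :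
    variance (fun ω => k + X ω) μ = variance X μ := by
  have hmean : ∫ ω, (k + X ω) ∂μ = k + ∫ ω, X ω ∂μ := by
    rw [integral_add (integrable_const k) hX, integral_const, probReal_univ,
      one_smul]
  unfold ProbabilityTheory.variance ProbabilityTheory.evariance
  rw [hmean]
  congr 1
  apply lintegral_congr
  intro ω
  have h2 : k + X ω - (k + ∫ ω, X ω ∂μ) = X ω - ∫ ω, X ω ∂μ := by ring
  rw [h2]

namespace consAux
variable {n : ℕ}

noncomputable def Xp (w : Fin n → ℝ) (N : ℕ) (ω : ℕ → Fin n → ℝ) : ℝ :=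
  ∑ i, w i * ∑ j ∈ Finset.range N, ω j i

noncomputable def Xinf (w : Fin n → ℝ) (ω : ℕ → Fin n → ℝ) : ℝ :=
  ∑ i, w i * ∑' j, ω j i

noncomputable def gp (w : Fin n → ℝ) (N : ℕ) (ω : ℕ → Fin n → ℝ) : ℝ :=
  ∑ i, |w i| * ∑ j ∈ Finset.range N, |ω j i|

noncomputable def gf (w : Fin n → ℝ) (ω : ℕ → Fin n → ℝ) : ℝ :=
  ∑ i, |w i| * ∑' j, |ω j i|

lemma measurable_coord (k : ℕ) (i : Fin n) :
    Measurable fun ω : ℕ → Fin n → ℝ => ω k i :=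
  (measurable_pi_apply i).comp (measurable_pi_apply k)

lemma measurable_Xp (w : Fin n → ℝ) (N : ℕ) : Measurable (Xp w N) := by
  unfold Xp
  apply Finset.measurable_sum
  intro i _
  exact (Finset.measurable_sum _ fun j _ => measurable_coord j i).const_mul _

lemma measurable_gp (w : Fin n → ℝ) (N : ℕ) : Measurable (gp w N) := by
  unfold gp
  apply Finset.measurable_sum
  intro i _
  exact (Finset.measurable_sum _ fun j _ => (measurable_coord j i).abs).const_mul _

variable {w : Fin n → ℝ} {ω : ℕ → Fin n → ℝ} (hω : ∀ i, Summable fun j => |ω j i|)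
include hω

lemma tendsto_Xp : Tendsto (fun N => Xp w N ω) atTop (𝓝 (Xinf w ω)) := by
  unfold Xp Xinf
  apply tendsto_finset_sum
  intro i _
  exact ((summable_abs_iff.mp (hω i)).hasSum.tendsto_sum_nat).const_mul _

lemma tendsto_gp : Tendsto (fun N => gp w N ω) atTop (𝓝 (gf w ω)) := by
  unfold gp gf
  apply tendsto_finset_sum
  intro i _
  exact ((hω i).hasSum.tendsto_sum_nat).const_mul _

lemma abs_Xp_le (N : ℕ) : |Xp w N ω| ≤ gf w ω := by
  unfold Xp gf
  calc |∑ i, w i * ∑ j ∈ Finset.range N, ω j i|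
      ≤ ∑ i, |w i * ∑ j ∈ Finset.range N, ω j i| := Finset.abs_sum_le_sum_abs _ _
    _ ≤ ∑ i, |w i| * ∑' j, |ω j i| := by
        apply Finset.sum_le_sum
        intro i _
        rw [abs_mul]
        apply mul_le_mul_of_nonneg_left _ (abs_nonneg _)
        calc |∑ j ∈ Finset.range N, ω j i| ≤ ∑ j ∈ Finset.range N, |ω j i| :=
              Finset.abs_sum_le_sum_abs _ _
          _ ≤ ∑' j, |ω j i| := (hω i).sum_le_tsum _ (fun j _ => abs_nonneg _)

lemma abs_Xinf_le : |Xinf w ω| ≤ gf w ω := by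
  unfold Xinf gf
  calc |∑ i, w i * ∑' j, ω j i| ≤ ∑ i, |w i * ∑' j, ω j i| := Finset.abs_sum_le_sum_abs _ _
    _ ≤ ∑ i, |w i| * ∑' j, |ω j i| := by
        apply Finset.sum_le_sum
        intro i _
        rw [abs_mul]
        apply mul_le_mul_of_nonneg_left _ (abs_nonneg _)
        have h := norm_tsum_le_tsum_norm (f := fun j => ω j i)
          (by simpa [Real.norm_eq_abs] using hω i)
        simpa [Real.norm_eq_abs] using h

lemma gf_nonneg : 0 ≤ gf w ω := le_trans (abs_nonneg _) (abs_Xinf_le hω)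

end consAux

/-- **Unbiasedness and variance of the consensus value**: `E[θ_∞] = ⟨θ₀⟩` and
`var{θ_∞} = (2/n²) ∑_i s_i² c_i² / (1 - q_i²)`. -/
theorem accuracy_of_consensus_value {n : ℕ} (hn : 0 < n)
    (A : Matrix (Fin n) (Fin n) ℝ) (hAsymm : A.IsSymm) (hApos : ∀ i j, 0 ≤ A i j)
    (L : Matrix (Fin n) (Fin n) ℝ)
    (hL : L = Matrix.diagonal (fun i => ∑ j, A i j) - A)
    (hconn : ∀ v : Fin n → ℝ, L.mulVec v = 0 → ∃ a : ℝ, v = fun _ => a)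
    (h : ℝ) (hh0 : 0 < h)
    (hh1 : h < 1 / Finset.univ.sup'
      (Finset.univ_nonempty_iff.mpr (Fin.pos_iff_nonempty.mp hn)) (fun i => ∑ j, A i j))
    (s c q : Fin n → ℝ) (hs : ∀ i, s i ∈ Set.Ioo (0 : ℝ) 2)
    (hc : ∀ i, 0 < c i) (hq : ∀ i, q i ∈ Set.Ioo (|s i - 1|) 1)
    (P : Measure (ℕ → Fin n → ℝ)) [IsProbabilityMeasure P]
    (hlaw : ∀ (k : ℕ) (i : Fin n),
      Measure.map (fun ω : ℕ → Fin n → ℝ => ω k i) P = lap (c i * q i ^ k))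
    (hind : iIndepFun
      (fun (p : ℕ × Fin n) (ω : ℕ → Fin n → ℝ) => ω p.1 p.2) P)
    (θ0 : Fin n → ℝ) :
    (∫ ω, thetaInf θ0 s ω ∂P) = ave θ0 ∧
    variance (fun ω => thetaInf θ0 s ω) P
      = (2 / (n : ℝ) ^ 2) * ∑ i, s i ^ 2 * c i ^ 2 / (1 - q i ^ 2) := by
  classical
  open consAux in
  -- basic facts
  have hq0 : ∀ i, 0 < q i := fun i => lt_of_le_of_lt (abs_nonneg _) (hq i).1
  have hq1 : ∀ i, q i < 1 := fun i => (hq i).2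
  have hb : ∀ (k : ℕ) (i : Fin n), 0 < c i * q i ^ k := fun k i => by
    have := hc i; have := hq0 i; positivity
  -- coordinate moments
  have hmem : ∀ (k : ℕ) (i : Fin n), MemLp (fun ω : ℕ → Fin n → ℝ => ω k i) 2 P := by
    intro k i
    have h := lapAux.memLp_id (hb k i)
    rw [← hlaw k i] at h
    exact (memLp_map_measure_iff aestronglyMeasurable_id
      (measurable_coord k i).aemeasurable).mp h
  have hmean : ∀ (k : ℕ) (i : Fin n), ∫ ω, ω k i ∂P = 0 := by
    intro k i
    have h := lapAux.integral_id (hb k i)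
    rwa [← hlaw k i, integral_map (f := fun x : ℝ => x)
      (measurable_coord k i).aemeasurable aestronglyMeasurable_id] at h
  have hsqm : ∀ (k : ℕ) (i : Fin n), ∫ ω, (ω k i) ^ 2 ∂P = 2 * (c i * q i ^ k) ^ 2 := by
    intro k i
    have h := lapAux.integral_sq (hb k i)
    rwa [← hlaw k i, integral_map (f := fun x : ℝ => x ^ 2)
      (measurable_coord k i).aemeasurable
      (measurable_id.pow_const 2).aestronglyMeasurable] at h
  have hvar : ∀ (k : ℕ) (i : Fin n),
      variance (fun ω : ℕ → Fin n → ℝ => ω k i) P = 2 * (c i * q i ^ k) ^ 2 := by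
    intro k i
    rw [variance_eq_sub (hmem k i), hmean k i]
    have h1 : P[(fun ω : ℕ → Fin n → ℝ => ω k i) ^ 2] = ∫ ω, (ω k i) ^ 2 ∂P := by
      apply integral_congr_ae; exact .of_forall fun ω => by simp
    rw [h1, hsqm k i]; ring
  -- Borel-Cantelli: a.s. absolute summability
  set r : Fin n → ℝ := fun i => (1 + q i) / 2 with hrdef
  have hr0 : ∀ i, 0 < r i := fun i => by have := hq0 i; simp only [hrdef]; linarith
  have hqr : ∀ i, q i < r i := fun i => by have := hq1 i; simp only [hrdef]; linarith
  have hr1 : ∀ i, r i < 1 := fun i => by have := hq1 i; simp only [hrdef]; linarith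
  have ht0 : ∀ i, 0 ≤ q i ^ 2 / r i ^ 2 := fun i => by positivity
  have ht1 : ∀ i, q i ^ 2 / r i ^ 2 < 1 := fun i => by
    rw [div_lt_one (by have := hr0 i; positivity)]
    have h1 := hq0 i; have h2 := hqr i; nlinarith
  have epow : ∀ (x : ℝ) (j : ℕ), (x ^ j) ^ 2 = (x ^ 2) ^ j := fun x j => by
    rw [← pow_mul, ← pow_mul, mul_comm]
  have hcheb : ∀ (i : Fin n) (j : ℕ), P {ω | r i ^ j ≤ |ω j i|}
      ≤ ENNReal.ofReal ((2 * c i ^ 2) * (q i ^ 2 / r i ^ 2) ^ j) := by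
    intro i j
    have h := meas_ge_le_variance_div_sq (hmem j i) (pow_pos (hr0 i) j)
    simp only [hmean j i, sub_zero, hvar j i] at h
    refine h.trans (le_of_eq ?_)
    congr 1
    have e4 : (q i ^ 2 / r i ^ 2) ^ j = (q i ^ 2) ^ j / (r i ^ 2) ^ j := div_pow _ _ j
    rw [e4, ← epow (q i) j, ← epow (r i) j]
    ring
  have htsum : ∀ i, (∑' j : ℕ, P {ω | r i ^ j ≤ |ω j i|}) ≠ ⊤ := by
    intro i
    have hsum : Summable fun j : ℕ => (2 * c i ^ 2) * (q i ^ 2 / r i ^ 2) ^ j :=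
      (summable_geometric_of_lt_one (ht0 i) (ht1 i)).mul_left _
    have h1 := ENNReal.tsum_le_tsum (hcheb i)
    rw [← ENNReal.ofReal_tsum_of_nonneg (fun j => by have := hc i; positivity) hsum] at h1
    exact ne_top_of_le_ne_top ENNReal.ofReal_ne_top h1
  have haesum : ∀ᵐ ω ∂P, ∀ i, Summable fun j : ℕ => |ω j i| := by
    rw [ae_all_iff]
    intro i
    filter_upwards [ae_eventually_notMem (htsum i)] with ω hω
    apply Summable.of_norm_bounded_eventually (g := fun j => r i ^ j)
      (summable_geometric_of_lt_one (hr0 i).le (hr1 i))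
    rw [Nat.cofinite_eq_atTop]
    filter_upwards [hω] with j hj
    simp only [Set.mem_setOf_eq, not_le] at hj
    rw [Real.norm_eq_abs, abs_abs]
    exact hj.le
  -- the weights
  set w : Fin n → ℝ := fun i => s i / n with hwdef
  -- eLpNorm bounds for the partial sums
  have hterm_norm : ∀ (k : ℕ) (i : Fin n) (a : ℝ),
      eLpNorm (fun ω : ℕ → Fin n → ℝ => a * ω k i) 2 P
        ≤ ENNReal.ofReal (|a| * (2 * (c i * q i ^ k))) := by
    intro k i a
    have h0 : (fun ω : ℕ → Fin n → ℝ => a * ω k i)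
        = a • (fun ω : ℕ → Fin n → ℝ => ω k i) := rfl
    rw [h0, eLpNorm_const_smul, ENNReal.ofReal_mul (abs_nonneg a)]
    have h1 : ‖a‖ₑ = ENNReal.ofReal |a| := Real.enorm_eq_ofReal_abs a
    rw [h1]
    exact mul_le_mul_right (lapAux.eLpNorm_le (hb k i) (hmem k i) (hsqm k i)) _
  have hgeom : ∀ (i : Fin n) (N : ℕ), ∑ j ∈ Finset.range N, q i ^ j ≤ (1 - q i)⁻¹ := by
    intro i N
    have h := Summable.sum_le_tsum (Finset.range N) (fun j _ => by have := hq0 i; positivity)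
      (summable_geometric_of_lt_one (hq0 i).le (hq1 i))
    rwa [tsum_geometric_of_lt_one (hq0 i).le (hq1 i)] at h
  set C : ℝ := ∑ i, |w i| * (2 * (c i * (1 - q i)⁻¹)) with hCdef
  have hsumC : ∀ N : ℕ, ∑ p ∈ Finset.range N ×ˢ (Finset.univ : Finset (Fin n)),
      |w p.2| * (2 * (c p.2 * q p.2 ^ p.1)) ≤ C := by
    intro N
    rw [Finset.sum_product, Finset.sum_comm]
    apply Finset.sum_le_sum
    intro i _
    have he : ∑ j ∈ Finset.range N, |w i| * (2 * (c i * q i ^ j))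
        = (|w i| * (2 * c i)) * ∑ j ∈ Finset.range N, q i ^ j := by
      rw [Finset.mul_sum]; apply Finset.sum_congr rfl; intro j _; ring
    rw [he]
    calc (|w i| * (2 * c i)) * ∑ j ∈ Finset.range N, q i ^ j
        ≤ (|w i| * (2 * c i)) * (1 - q i)⁻¹ := by
          apply mul_le_mul_of_nonneg_left (hgeom i N) (by have := hc i; positivity)
      _ = |w i| * (2 * (c i * (1 - q i)⁻¹)) := by ring
  have hreprXp : ∀ N : ℕ, Xp w N = ∑ p ∈ Finset.range N ×ˢ (Finset.univ : Finset (Fin n)),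
      (fun ω : ℕ → Fin n → ℝ => w p.2 * ω p.1 p.2) := by
    intro N
    funext ω
    rw [Finset.sum_apply]
    unfold consAux.Xp
    rw [Finset.sum_product, Finset.sum_comm]
    apply Finset.sum_congr rfl
    intro i _
    rw [Finset.mul_sum]
  have hXp_norm : ∀ N, eLpNorm (Xp w N) 2 P ≤ ENNReal.ofReal C := by
    intro N
    rw [hreprXp N]
    refine le_trans (eLpNorm_sum_le
      (fun p _ => ((measurable_coord p.1 p.2).const_mul _).aestronglyMeasurable)
      one_le_two) ?_
    calc ∑ p ∈ Finset.range N ×ˢ (Finset.univ : Finset (Fin n)),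
          eLpNorm (fun ω : ℕ → Fin n → ℝ => w p.2 * ω p.1 p.2) 2 P
        ≤ ∑ p ∈ Finset.range N ×ˢ (Finset.univ : Finset (Fin n)),
            ENNReal.ofReal (|w p.2| * (2 * (c p.2 * q p.2 ^ p.1))) :=
          Finset.sum_le_sum fun p _ => hterm_norm p.1 p.2 (w p.2)
      _ = ENNReal.ofReal (∑ p ∈ Finset.range N ×ˢ (Finset.univ : Finset (Fin n)),
            |w p.2| * (2 * (c p.2 * q p.2 ^ p.1))) :=
          (ENNReal.ofReal_sum_of_nonneg (fun p _ => by have := hc p.2; have := hq0 p.2; positivity)).symm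
      _ ≤ ENNReal.ofReal C := ENNReal.ofReal_le_ofReal (hsumC N)
  have hreprgp : ∀ N : ℕ, gp w N = ∑ p ∈ Finset.range N ×ˢ (Finset.univ : Finset (Fin n)),
      (fun ω : ℕ → Fin n → ℝ => |w p.2| * |ω p.1 p.2|) := by
    intro N
    funext ω
    rw [Finset.sum_apply]
    unfold consAux.gp
    rw [Finset.sum_product, Finset.sum_comm]
    apply Finset.sum_congr rfl
    intro i _
    rw [Finset.mul_sum]
  have hgp_norm : ∀ N, eLpNorm (gp w N) 2 P ≤ ENNReal.ofReal C := by
    intro N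
    rw [hreprgp N]
    refine le_trans (eLpNorm_sum_le
      (fun p _ => (((measurable_coord p.1 p.2).abs).const_mul _).aestronglyMeasurable)
      one_le_two) ?_
    calc ∑ p ∈ Finset.range N ×ˢ (Finset.univ : Finset (Fin n)),
          eLpNorm (fun ω : ℕ → Fin n → ℝ => |w p.2| * |ω p.1 p.2|) 2 P
        ≤ ∑ p ∈ Finset.range N ×ˢ (Finset.univ : Finset (Fin n)),
            ENNReal.ofReal (|w p.2| * (2 * (c p.2 * q p.2 ^ p.1))) := by
          apply Finset.sum_le_sum
          intro p _
          have habs : eLpNorm (fun ω : ℕ → Fin n → ℝ => |w p.2| * |ω p.1 p.2|) 2 P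
              = eLpNorm (fun ω : ℕ → Fin n → ℝ => w p.2 * ω p.1 p.2) 2 P := by
            rw [← eLpNorm_norm (fun ω : ℕ → Fin n → ℝ => w p.2 * ω p.1 p.2)]
            congr 1
            funext ω
            rw [Real.norm_eq_abs, abs_mul]
          rw [habs]
          exact hterm_norm p.1 p.2 (w p.2)
      _ = ENNReal.ofReal (∑ p ∈ Finset.range N ×ˢ (Finset.univ : Finset (Fin n)),
            |w p.2| * (2 * (c p.2 * q p.2 ^ p.1))) :=
          (ENNReal.ofReal_sum_of_nonneg (fun p _ => by have := hc p.2; have := hq0 p.2; positivity)).symm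
      _ ≤ ENNReal.ofReal C := ENNReal.ofReal_le_ofReal (hsumC N)
  -- a.e. measurability and limits
  have hXp_aesm : ∀ N, AEStronglyMeasurable (Xp w N) P :=
    fun N => (measurable_Xp w N).aestronglyMeasurable
  have hgp_aesm : ∀ N, AEStronglyMeasurable (gp w N) P :=
    fun N => (measurable_gp w N).aestronglyMeasurable
  have hlimXp : ∀ᵐ ω ∂P, Tendsto (fun N => Xp w N ω) atTop (𝓝 (Xinf w ω)) :=
    haesum.mono fun ω hω => tendsto_Xp hω
  have hlimgp : ∀ᵐ ω ∂P, Tendsto (fun N => gp w N ω) atTop (𝓝 (gf w ω)) :=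
    haesum.mono fun ω hω => tendsto_gp hω
  have hXinf_aesm : AEStronglyMeasurable (Xinf w) P :=
    aestronglyMeasurable_of_tendsto_ae atTop hXp_aesm hlimXp
  have hgf_aesm : AEStronglyMeasurable (gf w) P :=
    aestronglyMeasurable_of_tendsto_ae atTop hgp_aesm hlimgp
  have hgf_mem : MemLp (gf w) 2 P := by
    refine ⟨hgf_aesm, ?_⟩
    have hle := Lp.eLpNorm_lim_le_liminf_eLpNorm (p := 2) hgp_aesm (gf w) hlimgp
    have hle2 : (atTop.liminf fun N => eLpNorm (gp w N) 2 P) ≤ ENNReal.ofReal C :=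
      by
        apply le_trans liminf_le_limsup
        exact limsup_le_of_le (h := Eventually.of_forall hgp_norm)
    exact lt_of_le_of_lt (hle.trans hle2) ENNReal.ofReal_lt_top
  have hXinf_mem : MemLp (Xinf w) 2 P := by
    refine ⟨hXinf_aesm, ?_⟩
    have hmono : ∀ᵐ ω ∂P, ‖Xinf w ω‖ ≤ ‖gf w ω‖ := by
      filter_upwards [haesum] with ω hω
      rw [Real.norm_eq_abs, Real.norm_eq_abs]
      exact (abs_Xinf_le hω).trans (le_abs_self _)
    exact lt_of_le_of_lt (eLpNorm_mono_ae hmono) hgf_mem.2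
  have hgf_int : Integrable (gf w) P := hgf_mem.integrable one_le_two
  have hgf_sq_int : Integrable (fun ω => gf w ω ^ 2) P := hgf_mem.integrable_sq
  have hXinf_int : Integrable (Xinf w) P := hXinf_mem.integrable one_le_two
  -- MemLp of partial sums and their mean/variance
  have hYmem : ∀ p : ℕ × Fin n, MemLp (fun ω : ℕ → Fin n → ℝ => w p.2 * ω p.1 p.2) 2 P :=
    fun p => (hmem p.1 p.2).const_mul _
  have hXp_mem : ∀ N, MemLp (Xp w N) 2 P := by
    intro N
    rw [hreprXp N]
    exact memLp_finset_sum' _ fun p _ => hYmem p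
  have hXp_mean : ∀ N, ∫ ω, Xp w N ω ∂P = 0 := by
    intro N
    have hint : ∀ p : ℕ × Fin n,
        Integrable (fun ω : ℕ → Fin n → ℝ => w p.2 * ω p.1 p.2) P :=
      fun p => (hYmem p).integrable one_le_two
    have hrw : ∫ ω, Xp w N ω ∂P = ∑ p ∈ Finset.range N ×ˢ (Finset.univ : Finset (Fin n)),
        ∫ ω, w p.2 * ω p.1 p.2 ∂P := by
      rw [← integral_finset_sum _ fun p _ => hint p]
      apply integral_congr_ae
      apply Filter.Eventually.of_forall
      intro ω
      simp only [hreprXp N, Finset.sum_apply]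
    rw [hrw]
    apply Finset.sum_eq_zero
    intro p _
    rw [integral_const_mul, hmean p.1 p.2, mul_zero]
  have hindepY : ∀ p p' : ℕ × Fin n, p ≠ p' →
      IndepFun (fun ω : ℕ → Fin n → ℝ => w p.2 * ω p.1 p.2)
        (fun ω : ℕ → Fin n → ℝ => w p'.2 * ω p'.1 p'.2) P := by
    intro p p' hne
    have h := (hind.indepFun hne).comp
      (measurable_id.const_mul (w p.2)) (measurable_id.const_mul (w p'.2))
    simpa [Function.comp_def] using h
  have hXp_var : ∀ N, variance (Xp w N) P
      = ∑ i, (w i ^ 2 * (2 * c i ^ 2)) * ∑ j ∈ Finset.range N, (q i ^ 2) ^ j := by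
    intro N
    rw [hreprXp N, IndepFun.variance_sum (fun p _ => hYmem p)
      (fun p _ p' _ hne => hindepY p p' hne)]
    have hvY : ∀ p : ℕ × Fin n, variance (fun ω : ℕ → Fin n → ℝ => w p.2 * ω p.1 p.2) P
        = (w p.2 ^ 2 * (2 * c p.2 ^ 2)) * (q p.2 ^ 2) ^ p.1 := by
      intro p
      rw [variance_const_mul, hvar p.1 p.2, ← epow (q p.2) p.1]
      ring
    rw [Finset.sum_congr rfl fun p _ => hvY p, Finset.sum_product, Finset.sum_comm]
    apply Finset.sum_congr rfl
    intro i _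
    rw [Finset.mul_sum]
  have hXp_sq : ∀ N, ∫ ω, Xp w N ω ^ 2 ∂P
      = ∑ i, (w i ^ 2 * (2 * c i ^ 2)) * ∑ j ∈ Finset.range N, (q i ^ 2) ^ j := by
    intro N
    have h1 := variance_eq_sub (hXp_mem N)
    rw [hXp_mean N] at h1
    have h2 : P[(Xp w N) ^ 2] = ∫ ω, Xp w N ω ^ 2 ∂P := by
      apply integral_congr_ae; exact .of_forall fun ω => by simp
    rw [h2] at h1
    rw [← hXp_var N, h1]
    ring
  -- dominated convergence
  have hDCT1 : Tendsto (fun N => ∫ ω, Xp w N ω ∂P) atTop (𝓝 (∫ ω, Xinf w ω ∂P)) := by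
    apply tendsto_integral_of_dominated_convergence (gf w) hXp_aesm hgf_int ?_ hlimXp
    intro N
    filter_upwards [haesum] with ω hω
    rw [Real.norm_eq_abs]
    exact abs_Xp_le hω N
  have hXinf_mean : ∫ ω, Xinf w ω ∂P = 0 := by
    have h0 : (fun N => ∫ ω, Xp w N ω ∂P) = fun _ => (0 : ℝ) := funext hXp_mean
    rw [h0] at hDCT1
    exact tendsto_nhds_unique hDCT1 tendsto_const_nhds
  have hDCT2 : Tendsto (fun N => ∫ ω, Xp w N ω ^ 2 ∂P) atTop
      (𝓝 (∫ ω, Xinf w ω ^ 2 ∂P)) := by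
    apply tendsto_integral_of_dominated_convergence (fun ω => gf w ω ^ 2)
      (fun N => ((measurable_Xp w N).pow_const 2).aestronglyMeasurable) hgf_sq_int ?_ ?_
    · intro N
      filter_upwards [haesum] with ω hω
      rw [Real.norm_eq_abs, abs_pow]
      exact pow_le_pow_left₀ (abs_nonneg _) (abs_Xp_le hω N) 2
    · filter_upwards [hlimXp] with ω hω
      exact hω.pow 2
  have hq2 : ∀ i, (0:ℝ) ≤ q i ^ 2 := fun i => sq_nonneg _
  have hq21 : ∀ i, q i ^ 2 < 1 := fun i => by have h1 := hq0 i; have h2 := hq1 i; nlinarith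
  have hVlim : Tendsto (fun N => ∑ i, (w i ^ 2 * (2 * c i ^ 2))
      * ∑ j ∈ Finset.range N, (q i ^ 2) ^ j) atTop
      (𝓝 (∑ i, (w i ^ 2 * (2 * c i ^ 2)) * (1 - q i ^ 2)⁻¹)) := by
    apply tendsto_finset_sum
    intro i _
    exact ((hasSum_geometric_of_lt_one (hq2 i) (hq21 i)).tendsto_sum_nat).const_mul _
  have hXinf_sq : ∫ ω, Xinf w ω ^ 2 ∂P
      = ∑ i, (w i ^ 2 * (2 * c i ^ 2)) * (1 - q i ^ 2)⁻¹ := by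
    have h0 : (fun N => ∫ ω, Xp w N ω ^ 2 ∂P) = fun N => ∑ i, (w i ^ 2 * (2 * c i ^ 2))
        * ∑ j ∈ Finset.range N, (q i ^ 2) ^ j := funext hXp_sq
    rw [h0] at hDCT2
    exact tendsto_nhds_unique hDCT2 hVlim
  -- conclusion
  have hae_eq : (fun ω => thetaInf θ0 s ω) =ᵐ[P] fun ω => ave θ0 + Xinf w ω := by
    filter_upwards [haesum] with ω hω
    have hsum : ∀ i, Summable fun j => ω j i := fun i => summable_abs_iff.mp (hω i)
    rw [thetaInf, if_pos hsum]
    rfl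
  constructor
  · rw [integral_congr_ae hae_eq, integral_add (integrable_const _) hXinf_int,
      hXinf_mean, integral_const]
    simp
  · rw [varianceAux.congr_ae hae_eq, varianceAux.const_add hXinf_int (ave θ0),
      variance_eq_sub hXinf_mem, hXinf_mean]
    have h2 : P[(Xinf w) ^ 2] = ∫ ω, Xinf w ω ^ 2 ∂P := by
      apply integral_congr_ae; exact .of_forall fun ω => by simp
    rw [h2, hXinf_sq]
    rw [show (0:ℝ) ^ 2 = 0 by norm_num, sub_zero, Finset.mul_sum]
    apply Finset.sum_congr rfl
    intro i _
    have hne : (1 - q i ^ 2) ≠ 0 := by have := hq21 i; nlinarith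
    have hn' : (n : ℝ) ≠ 0 := Nat.cast_ne_zero.mpr hn.ne'
    simp only [hwdef]
    field_simp
end

section
/- (p, r)-accuracy of the algorithm: Under the differentially private Laplacian consensus dynamics with the stated assumptions, for any p ∈ (0,1) the convergence point θ_∞ satisfies P{ |θ_∞ − ⟨θ₀⟩| ≤ r } ≥ 1 − p with r = (1/n) · sqrt( (2/p) Σ_{i=1}^n s_i² c_i² / (1 − q_i²) ). -/
open MeasureTheory ProbabilityTheory Filter Set Real
open scoped ENNReal NNReal Topology

variable {b : ℝ}

lemma lapA (hb : 0 < b) (k : ℕ) :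
    IntegrableOn (fun x : ℝ => x ^ k * Real.exp (-x / b)) (Ioi 0) := by
  have h := integrableOn_rpow_mul_exp_neg_mul_rpow (p := 1) (s := (k : ℝ)) (b := b⁻¹)
    (by exact_mod_cast neg_one_lt_zero.trans_le (Nat.cast_nonneg k)) one_pos (inv_pos.2 hb)
  refine h.congr_fun (fun x hx => ?_) measurableSet_Ioi
  dsimp only; rw [Real.rpow_natCast, Real.rpow_one]
  ring_nf

lemma lap_dens_cont (b : ℝ) (k : ℕ) :
    Continuous fun x : ℝ => |x| ^ k * ((2 * b)⁻¹ * Real.exp (-|x| / b)) := by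
  fun_prop

lemma lapC (hb : 0 < b) (k : ℕ) :
    Integrable (fun x : ℝ => |x| ^ k * ((2 * b)⁻¹ * Real.exp (-|x| / b))) := by
  have hIoi : IntegrableOn (fun x : ℝ => |x| ^ k * ((2 * b)⁻¹ * Real.exp (-|x| / b))) (Ioi 0) := by
    refine IntegrableOn.congr_fun ((lapA hb k).const_mul (2*b)⁻¹) (fun x hx => ?_)
      measurableSet_Ioi
    rw [abs_of_pos (mem_Ioi.mp hx)]; ring
  have hIic : IntegrableOn (fun x : ℝ => |x| ^ k * ((2 * b)⁻¹ * Real.exp (-|x| / b))) (Iic 0) := by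
    rw [← Measure.map_neg_eq_self (volume : Measure ℝ)]
    have m : MeasurableEmbedding fun x : ℝ => -x := (Homeomorph.neg ℝ).measurableEmbedding
    rw [m.integrableOn_map_iff]
    simp_rw [Function.comp_def, abs_neg, neg_preimage, neg_Iic, neg_zero]
    exact Iff.mpr integrableOn_Ici_iff_integrableOn_Ioi hIoi
  have := hIic.union hIoi
  rwa [Iic_union_Ioi, integrableOn_univ] at this

lemma lapB (hb : 0 < b) (k : ℕ) :
    ∫ x in Ioi 0, x ^ k * Real.exp (-x / b) = b ^ (k + 1) * k.factorial := by
  have h := integral_rpow_mul_exp_neg_mul_Ioi (a := (k : ℝ) + 1) (r := b⁻¹)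
    (by positivity) (inv_pos.2 hb)
  rw [show ∫ t in Ioi 0, t ^ ((k : ℝ) + 1 - 1) * Real.exp (-(b⁻¹ * t))
      = ∫ x in Ioi 0, x ^ k * Real.exp (-x / b) from by
    congr 1; funext x
    rw [add_sub_cancel_right, Real.rpow_natCast]; ring_nf] at h
  rw [h, one_div, inv_inv, show ((k : ℝ) + 1) = ((k + 1 : ℕ) : ℝ) by push_cast; ring,
    Real.rpow_natCast, show ((k + 1 : ℕ) : ℝ) = (k : ℝ) + 1 by push_cast; ring,
    Real.Gamma_nat_eq_factorial]

lemma lapD (hb : 0 < b) (k : ℕ) :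
    Integrable (fun x : ℝ => x ^ k * ((2 * b)⁻¹ * Real.exp (-|x| / b))) := by
  refine (lapC hb k).mono' ?_ (Filter.Eventually.of_forall fun x => ?_)
  · exact Continuous.aestronglyMeasurable (by fun_prop)
  · rw [Real.norm_eq_abs, abs_mul, abs_pow, abs_of_nonneg (show (0:ℝ) ≤ (2*b)⁻¹ * Real.exp (-|x|/b) by positivity)]

lemma lapE (hb : 0 < b) {k : ℕ} (hk : Even k) :
    ∫ x : ℝ, x ^ k * ((2 * b)⁻¹ * Real.exp (-|x| / b)) = b ^ k * k.factorial := by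
  have : (fun x : ℝ => x ^ k * ((2 * b)⁻¹ * Real.exp (-|x| / b)))
      = fun x : ℝ => |x| ^ k * ((2 * b)⁻¹ * Real.exp (-|x| / b)) := by
    funext x; rw [hk.pow_abs]
  rw [this, integral_comp_abs (f := fun x : ℝ => x ^ k * ((2 * b)⁻¹ * Real.exp (-x / b)))]
  have : ∫ x in Ioi (0:ℝ), x ^ k * ((2 * b)⁻¹ * Real.exp (-x / b))
      = (2 * b)⁻¹ * ∫ x in Ioi (0:ℝ), x ^ k * Real.exp (-x / b) := by
    rw [← integral_const_mul]; congr 1; funext x; ring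
  rw [this, lapB hb k, pow_succ]
  field_simp

lemma lapF (hb : 0 < b) :
    ∫ x : ℝ, x * ((2 * b)⁻¹ * Real.exp (-|x| / b)) = 0 := by
  have hint := lapD hb 1
  simp only [pow_one] at hint
  set f : ℝ → ℝ := fun x => x * ((2 * b)⁻¹ * Real.exp (-|x| / b)) with hf
  have h1 : ∫ x in Iic (0:ℝ), f x = - ∫ x in Ioi (0:ℝ), f x := by
    have : ∫ x in Iic (0:ℝ), f x = ∫ x in Iic (0:ℝ), -(f (-x)) := by
      refine setIntegral_congr_fun measurableSet_Iic  (fun x _ => ?_)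
      simp only [hf, abs_neg]; ring
    rw [this, integral_neg]
    congr 1
    rw [show (0:ℝ) = -0 by ring, integral_comp_neg_Iic]
    norm_num
  have h2 := intervalIntegral.integral_Iic_add_Ioi (μ := volume) (b := (0:ℝ))
    hint.integrableOn hint.integrableOn
  rw [h1] at h2
  rw [show  (∫ x : ℝ, f x) = integral volume f from rfl] at h2
  linarith [h2]

lemma lap_dens_nonneg (hb : 0 < b) (x : ℝ) : 0 ≤ (2 * b)⁻¹ * Real.exp (-|x| / b) := by positivity

lemma lap_isProb (hb : 0 < b) : IsProbabilityMeasure (lap b) := by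
  constructor
  rw [lap, withDensity_apply _ MeasurableSet.univ, Measure.restrict_univ]
  have h0 := lapD hb 0
  simp only [pow_zero, one_mul] at h0
  rw [← ofReal_integral_eq_lintegral_ofReal h0
    (Filter.Eventually.of_forall fun x => lap_dens_nonneg hb x)]
  have := lapE hb (Even.zero)
  simp only [pow_zero, one_mul, Nat.factorial_zero, Nat.cast_one, mul_one] at this
  rw [this, ENNReal.ofReal_one]

lemma lap_integral_eq (hb : 0 < b) (g : ℝ → ℝ) :
    ∫ x, g x ∂(lap b) = ∫ x, g x * ((2 * b)⁻¹ * Real.exp (-|x| / b)) := by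
  have hm : Measurable fun x : ℝ => ((2 * b)⁻¹ * Real.exp (-|x| / b)).toNNReal :=
    measurable_real_toNNReal.comp (by fun_prop)
  have : lap b = volume.withDensity
      fun x => ((((2 * b)⁻¹ * Real.exp (-|x| / b)).toNNReal : ℝ≥0) : ℝ≥0∞) := rfl
  rw [this, integral_withDensity_eq_integral_smul hm]
  congr 1; funext x
  rw [NNReal.smul_def, smul_eq_mul, Real.coe_toNNReal _ (lap_dens_nonneg hb x), mul_comm]

lemma lap_integrable_iff (hb : 0 < b) {g : ℝ → ℝ} :
    Integrable g (lap b) ↔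
      Integrable (fun x => g x * ((2 * b)⁻¹ * Real.exp (-|x| / b))) volume := by
  rw [lap, integrable_withDensity_iff (by fun_prop)
    (Filter.Eventually.of_forall fun x => ENNReal.ofReal_lt_top)]
  constructor <;> intro h <;> refine h.congr (Filter.Eventually.of_forall fun x => ?_) <;>
    · dsimp only
      rw [ENNReal.toReal_ofReal (lap_dens_nonneg hb x)]

lemma lap_integral_id (hb : 0 < b) : ∫ x, x ∂(lap b) = 0 := by
  rw [lap_integral_eq hb _]; exact lapF hb

lemma lap_integral_sq (hb : 0 < b) : ∫ x, x ^ 2 ∂(lap b) = 2 * b ^ 2 := by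
  rw [lap_integral_eq hb _, lapE hb even_two]
  norm_num [Nat.factorial]; ring

lemma lap_memLp_two (hb : 0 < b) : MemLp id 2 (lap b) := by
  rw [memLp_two_iff_integrable_sq aestronglyMeasurable_id]
  show Integrable (fun x : ℝ => x ^ 2) (lap b)
  rw [lap_integrable_iff hb]
  simpa using lapD hb 2


set_option maxHeartbeats 1000000 in
/-- **(p, r)-accuracy of the algorithm**: for any `p ∈ (0,1)`,
`P{ |θ_∞ - ⟨θ₀⟩| ≤ r } ≥ 1 - p` with
`r = (1/n)·√((2/p) ∑_i s_i² c_i² / (1 - q_i²))`. -/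
theorem accuracy_probability_bound {n : ℕ} (hn : 0 < n)
    (A : Matrix (Fin n) (Fin n) ℝ) (hAsymm : A.IsSymm) (hApos : ∀ i j, 0 ≤ A i j)
    (L : Matrix (Fin n) (Fin n) ℝ)
    (hL : L = Matrix.diagonal (fun i => ∑ j, A i j) - A)
    (hconn : ∀ v : Fin n → ℝ, L.mulVec v = 0 → ∃ a : ℝ, v = fun _ => a)
    (h : ℝ) (hh0 : 0 < h)
    (hh1 : h < 1 / Finset.univ.sup'
      (Finset.univ_nonempty_iff.mpr (Fin.pos_iff_nonempty.mp hn)) (fun i => ∑ j, A i j))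
    (s c q : Fin n → ℝ) (hs : ∀ i, s i ∈ Set.Ioo (0 : ℝ) 2)
    (hc : ∀ i, 0 < c i) (hq : ∀ i, q i ∈ Set.Ioo (|s i - 1|) 1)
    (P : Measure (ℕ → Fin n → ℝ)) [IsProbabilityMeasure P]
    (hlaw : ∀ (k : ℕ) (i : Fin n),
      Measure.map (fun ω : ℕ → Fin n → ℝ => ω k i) P = lap (c i * q i ^ k))
    (hind : iIndepFun
      (fun (p : ℕ × Fin n) (ω : ℕ → Fin n → ℝ) => ω p.1 p.2) P)
    (θ0 : Fin n → ℝ) :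
    ∀ p : ℝ, p ∈ Set.Ioo (0 : ℝ) 1 →
      ENNReal.ofReal (1 - p) ≤
        P {ω | |thetaInf θ0 s ω - ave θ0| ≤
          (1 / (n : ℝ)) * Real.sqrt ((2 / p) * ∑ i, s i ^ 2 * c i ^ 2 / (1 - q i ^ 2))} := by
  intro p hp
  obtain ⟨hp0, hp1⟩ := hp
  have hq0 : ∀ i, 0 < q i := fun i => (abs_nonneg _).trans_lt (hq i).1
  have hq1 : ∀ i, q i < 1 := fun i => (hq i).2
  have hqs0 : ∀ i, 0 < 1 - q i ^ 2 := fun i => by nlinarith [hq0 i, hq1 i]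
  have hs0 : ∀ i, 0 < s i := fun i => (hs i).1
  have hn' : (0:ℝ) < n := Nat.cast_pos.2 hn
  set T : ℝ := ∑ i, s i ^ 2 * c i ^ 2 / (1 - q i ^ 2) with hT
  have hTpos : 0 < T := by
    refine Finset.sum_pos
      (fun i _ => div_pos (mul_pos (pow_pos (hs0 i) 2) (pow_pos (hc i) 2)) (hqs0 i)) ?_
    exact Finset.univ_nonempty_iff.mpr (Fin.pos_iff_nonempty.mp hn)
  set r : ℝ := (1 / (n : ℝ)) * Real.sqrt ((2 / p) * T) with hr
  have hrpos : 0 < r := by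
    apply mul_pos (by positivity)
    exact Real.sqrt_pos.2 (by positivity)
  set a : Fin n → ℝ := fun i => s i / (n : ℝ) with ha
  set V : ℝ := ∑ i, a i ^ 2 * (2 * c i ^ 2 * (1 - q i ^ 2)⁻¹) with hV
  have hVpos : 0 < V := by
    refine Finset.sum_pos (fun i _ => ?_) (Finset.univ_nonempty_iff.mpr (Fin.pos_iff_nonempty.mp hn))
    have := hqs0 i; have := hs0 i; have := hc i; positivity
  have hVT : V = 2 / (n:ℝ)^2 * T := by
    rw [hV, hT, Finset.mul_sum]
    refine Finset.sum_congr rfl fun i _ => ?_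
    rw [ha]
    field_simp
    try ring
  have hr2 : r ^ 2 = V / p := by
    rw [hr, mul_pow, Real.sq_sqrt (by positivity), hVT]
    field_simp
    try ring
  -- random variables
  set X : ℕ × Fin n → (ℕ → Fin n → ℝ) → ℝ := fun pr ω => ω pr.1 pr.2 with hX
  have hXmeas : ∀ pr, Measurable (X pr) :=
    fun pr => (measurable_pi_apply pr.2).comp (measurable_pi_apply pr.1)
  set bb : ℕ × Fin n → ℝ := fun pr => c pr.2 * q pr.2 ^ pr.1 with hbb
  have hbb0 : ∀ pr, 0 < bb pr := fun pr => mul_pos (hc _) (pow_pos (hq0 _) _)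
  have hmap : ∀ pr, Measure.map (X pr) P = lap (bb pr) := fun pr => hlaw pr.1 pr.2
  have hXmem : ∀ pr, MemLp (X pr) 2 P := by
    intro pr
    have h1 := lap_memLp_two (hbb0 pr)
    rw [← hmap pr] at h1
    exact (memLp_map_measure_iff aestronglyMeasurable_id (hXmeas pr).aemeasurable).1 h1
  have hEX : ∀ pr, ∫ ω, X pr ω ∂P = 0 := by
    intro pr
    have h1 : ∫ x, id x ∂(Measure.map (X pr) P) = 0 := by
      rw [hmap pr]; exact lap_integral_id (hbb0 pr)
    rwa [integral_map (hXmeas pr).aemeasurable aestronglyMeasurable_id] at h1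
  have hEX2 : ∀ pr, ∫ ω, (X pr ω) ^ 2 ∂P = 2 * bb pr ^ 2 := by
    intro pr
    have h1 : ∫ x, x ^ 2 ∂(Measure.map (X pr) P) = 2 * bb pr ^ 2 := by
      rw [hmap pr]; exact lap_integral_sq (hbb0 pr)
    rwa [integral_map (hXmeas pr).aemeasurable
      (Measurable.aestronglyMeasurable (by fun_prop : Measurable fun x : ℝ => x ^ 2))] at h1
  have hVarX : ∀ pr, variance (X pr) P = 2 * bb pr ^ 2 := by
    intro pr
    rw [variance_eq_sub (hXmem pr)]
    simp only [Pi.pow_apply]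
    rw [hEX2 pr, hEX pr]
    ring
  set Z : ℕ × Fin n → (ℕ → Fin n → ℝ) → ℝ := fun pr ω => a pr.2 * ω pr.1 pr.2 with hZ
  have hZmem : ∀ pr, MemLp (Z pr) 2 P := fun pr => (hXmem pr).const_mul (a pr.2)
  have hVarZ : ∀ pr, variance (Z pr) P = a pr.2 ^ 2 * (2 * bb pr ^ 2) := by
    intro pr
    have : variance (fun ω => a pr.2 * X pr ω) P = a pr.2 ^ 2 * variance (X pr) P :=
      variance_const_mul (a pr.2) (X pr) P
    rw [show Z pr = fun ω => a pr.2 * X pr ω from rfl, this, hVarX pr]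
  have hindZ : ∀ pr pr', pr ≠ pr' → IndepFun (Z pr) (Z pr') P := by
    intro pr pr' hne
    exact (hind.indepFun hne).comp (measurable_const_mul (a pr.2)) (measurable_const_mul (a pr'.2))
  -- finite-horizon sums
  set Ym : ℕ → (ℕ → Fin n → ℝ) → ℝ :=
    fun m ω => ∑ i, a i * ∑ j ∈ Finset.range m, ω j i with hYm
  have hYm_eq : ∀ m, (∑ pr ∈ Finset.range m ×ˢ Finset.univ, Z pr) = Ym m := by
    intro m
    funext ω
    rw [Finset.sum_apply, Finset.sum_product]
    simp only [hYm, Finset.mul_sum]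
    exact Finset.sum_comm
  have hYmmem : ∀ m, MemLp (Ym m) 2 P := by
    intro m; rw [← hYm_eq m]; exact memLp_finsetSum' _ (fun pr _ => hZmem pr)
  have key : ∀ m, ∫⁻ ω, ENNReal.ofReal ((Ym m ω) ^ 2) ∂P ≤ ENNReal.ofReal V := by
    intro m
    have hint2 : Integrable (fun ω => (Ym m ω) ^ 2) P := by
      have := (hYmmem m).integrable_sq
      refine this.congr (Filter.Eventually.of_forall fun ω => ?_)
      simp [Pi.pow_apply]
    have hEYm : ∫ ω, Ym m ω ∂P = 0 := by
      rw [← hYm_eq m]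
      have : ∫ ω, (∑ pr ∈ Finset.range m ×ˢ Finset.univ, Z pr) ω ∂P
          = ∑ pr ∈ Finset.range m ×ˢ Finset.univ, ∫ ω, Z pr ω ∂P := by
        simp only [Finset.sum_apply]
        exact integral_finset_sum _ (fun pr _ => (hZmem pr).integrable one_le_two)
      rw [this]
      refine Finset.sum_eq_zero fun pr _ => ?_
      rw [show (fun ω => Z pr ω) = fun ω => a pr.2 * X pr ω from rfl, integral_const_mul, hEX pr,
        mul_zero]
    have hvar : variance (Ym m) P = ∑ pr ∈ Finset.range m ×ˢ Finset.univ,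
        a pr.2 ^ 2 * (2 * bb pr ^ 2) := by
      rw [← hYm_eq m, IndepFun.variance_sum (fun pr _ => hZmem pr)
        (fun pr _ pr' _ hne => hindZ pr pr' hne)]
      exact Finset.sum_congr rfl fun pr _ => hVarZ pr
    have hsum_le : ∑ pr ∈ Finset.range m ×ˢ Finset.univ, a pr.2 ^ 2 * (2 * bb pr ^ 2) ≤ V := by
      rw [Finset.sum_product, Finset.sum_comm, hV]
      refine Finset.sum_le_sum fun i _ => ?_
      have hterm : ∀ j, a i ^ 2 * (2 * bb (j, i) ^ 2)
          = (a i ^ 2 * (2 * c i ^ 2)) * (q i ^ 2) ^ j := by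
        intro j
        simp only [hbb]
        rw [mul_pow, ← pow_mul, ← pow_mul, mul_comm j 2]
        ring
      simp only [hterm]
      rw [← Finset.mul_sum]
      have hgeom : ∑ j ∈ Finset.range m, (q i ^ 2) ^ j ≤ (1 - q i ^ 2)⁻¹ := by
        have hsumm : Summable (fun j : ℕ => (q i ^ 2) ^ j) :=
          summable_geometric_of_lt_one (by positivity) (by nlinarith [hq0 i, hq1 i])
        calc ∑ j ∈ Finset.range m, (q i ^ 2) ^ j ≤ ∑' j : ℕ, (q i ^ 2) ^ j :=
              Summable.sum_le_tsum _ (fun j _ => by positivity) hsumm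
          _ = (1 - q i ^ 2)⁻¹ := tsum_geometric_of_lt_one (by positivity)
              (by nlinarith [hq0 i, hq1 i])
      calc (a i ^ 2 * (2 * c i ^ 2)) * ∑ j ∈ Finset.range m, (q i ^ 2) ^ j
          ≤ (a i ^ 2 * (2 * c i ^ 2)) * (1 - q i ^ 2)⁻¹ := by
            refine mul_le_mul_of_nonneg_left hgeom (by positivity)
        _ = a i ^ 2 * (2 * c i ^ 2 * (1 - q i ^ 2)⁻¹) := by ring
    have hE2 : ∫ ω, (Ym m ω) ^ 2 ∂P = variance (Ym m) P := by
      have hv := variance_eq_sub (hYmmem m)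
      simp only [Pi.pow_apply] at hv
      rw [hv, hEYm]
      ring
    rw [← ofReal_integral_eq_lintegral_ofReal hint2
      (Filter.Eventually.of_forall fun ω => sq_nonneg _)]
    exact ENNReal.ofReal_le_ofReal (by rw [hE2, hvar]; exact hsum_le)
  -- liminf random variable
  set Zf : (ℕ → Fin n → ℝ) → ℝ≥0∞ :=
    fun ω => liminf (fun m => ENNReal.ofReal ((Ym m ω) ^ 2)) atTop with hZf
  have hYmmeas : ∀ m, Measurable (Ym m) := by
    intro m
    refine Finset.measurable_sum _ fun i _ => Measurable.const_mul ?_ _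
    exact Finset.measurable_sum _ fun j _ =>
      (measurable_pi_apply i).comp (measurable_pi_apply j)
  have hZfmeas : Measurable Zf :=
    Measurable.liminf fun m => ((hYmmeas m).pow_const 2).ennreal_ofReal
  have hZfint : ∫⁻ ω, Zf ω ∂P ≤ ENNReal.ofReal V := by
    refine le_trans (lintegral_liminf_le fun m => ((hYmmeas m).pow_const 2).ennreal_ofReal) ?_
    refine le_trans (liminf_le_liminf (Filter.Eventually.of_forall key)) ?_
    simp [liminf_const]
  -- inclusion of the bad event
  have hsub : {ω : ℕ → Fin n → ℝ | ¬ |thetaInf θ0 s ω - ave θ0| ≤ r}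
      ⊆ {ω | ENNReal.ofReal (r ^ 2) ≤ Zf ω} := by
    intro ω hω
    simp only [Set.mem_setOf_eq, not_le] at hω
    by_cases hsml : ∀ i, Summable (fun j => ω j i)
    · have hdiff : thetaInf θ0 s ω - ave θ0 = ∑ i, a i * ∑' j, ω j i := by
        rw [thetaInf, if_pos hsml]; ring
      set Y : ℝ := ∑ i, a i * ∑' j, ω j i with hY
      have htend : Tendsto (fun m => Ym m ω) atTop (𝓝 Y) := by
        refine tendsto_finset_sum _ fun i _ => ?_
        exact ((hsml i).hasSum.tendsto_sum_nat).const_mul _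
      have h2 : Tendsto (fun m => ENNReal.ofReal ((Ym m ω) ^ 2)) atTop
          (𝓝 (ENNReal.ofReal (Y ^ 2))) :=
        (ENNReal.continuous_ofReal.tendsto _).comp (htend.pow 2)
      have hZfω : Zf ω = ENNReal.ofReal (Y ^ 2) := h2.liminf_eq
      rw [Set.mem_setOf_eq, hZfω]
      apply ENNReal.ofReal_le_ofReal
      have hrY : r < |Y| := by rwa [hdiff] at hω
      have habs : |r| ≤ |Y| := by rw [abs_of_pos hrpos]; exact hrY.le
      calc r ^ 2 = |r| ^ 2 := by rw [abs_of_pos hrpos]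
        _ ≤ |Y| ^ 2 := pow_le_pow_left₀ (abs_nonneg r) habs 2
        _ = Y ^ 2 := sq_abs Y
    · exfalso
      have h0 : thetaInf θ0 s ω = ave θ0 := by rw [thetaInf, if_neg hsml]
      rw [h0] at hω
      simp at hω
      linarith
  -- Markov
  have hmark : P {ω | ENNReal.ofReal (r ^ 2) ≤ Zf ω} ≤ ENNReal.ofReal p := by
    have h1 := mul_meas_ge_le_lintegral₀ (μ := P) hZfmeas.aemeasurable (ENNReal.ofReal (r ^ 2))
    have h2 : ENNReal.ofReal (r ^ 2) * P {ω | ENNReal.ofReal (r ^ 2) ≤ Zf ω}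
        ≤ ENNReal.ofReal V := h1.trans hZfint
    have hr2pos : (0:ℝ) < r ^ 2 := by positivity
    have h3 : P {ω | ENNReal.ofReal (r ^ 2) ≤ Zf ω}
        ≤ ENNReal.ofReal V / ENNReal.ofReal (r ^ 2) := by
      rw [ENNReal.le_div_iff_mul_le (Or.inl (ENNReal.ofReal_pos.2 hr2pos).ne')
        (Or.inl ENNReal.ofReal_ne_top)]
      rwa [mul_comm]
    refine h3.trans_eq ?_
    rw [← ENNReal.ofReal_div_of_pos hr2pos]
    congr 1
    rw [hr2]
    field_simp
  -- conclude
  have hunion : (1 : ℝ≥0∞) ≤ P {ω | |thetaInf θ0 s ω - ave θ0| ≤ r} + ENNReal.ofReal p := by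
    calc (1 : ℝ≥0∞) = P Set.univ := (measure_univ).symm
      _ ≤ P ({ω | |thetaInf θ0 s ω - ave θ0| ≤ r}
            ∪ {ω | ¬ |thetaInf θ0 s ω - ave θ0| ≤ r}) := by
          refine measure_mono fun ω _ => ?_
          by_cases hle : |thetaInf θ0 s ω - ave θ0| ≤ r
          · exact Or.inl hle
          · exact Or.inr hle
      _ ≤ P {ω | |thetaInf θ0 s ω - ave θ0| ≤ r}
            + P {ω | ¬ |thetaInf θ0 s ω - ave θ0| ≤ r} := measure_union_le _ _
      _ ≤ _ := add_le_add_right ((measure_mono hsub).trans hmark) _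
  have : ENNReal.ofReal (1 - p) = 1 - ENNReal.ofReal p := by
    rw [ENNReal.ofReal_sub _ hp0.le, ENNReal.ofReal_one]
  rw [this]
  exact tsub_le_iff_right.2 hunion
end

section
/- Differential privacy of the algorithm: Under the differentially private Laplacian consensus dynamics with the stated assumptions, let δ > 0 be the adjacency bound and, for each i ∈ {1,…,n}, set ε_i = δ q_i / ( c_i (q_i − |s_i − 1|) ). Then for every i₀ ∈ {1,…,n}, every pair of initial states θ₀⁽¹⁾, θ₀⁽²⁾ that differ only in coordinate i₀ with |θ₀,ᵢ₀⁽²⁾ − θ₀,ᵢ₀⁽¹⁾| ≤ δ, and every Borel set O ⊆ (ℝⁿ)^ℕ, one has P{η : X_{θ₀⁽¹⁾}(η) ∈ O} ≤ e^{ε_{i₀}} · P{η : X_{θ₀⁽²⁾}(η) ∈ O}. Consequently the algorithm is ε-differentially private with ε = max_i ε_i. -/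
open MeasureTheory ProbabilityTheory Filter

open Set ENNReal

/-- The map `X_{θ₀}` sending a noise sequence `η` to the resulting sequence of
transmitted messages `x(k) = θ(k) + η(k)`. -/
noncomputable def msgSeq {n : ℕ} (L S : Matrix (Fin n) (Fin n) ℝ) (h : ℝ)
    (θ0 : Fin n → ℝ) (η : ℕ → Fin n → ℝ) : ℕ → Fin n → ℝ :=
  fun k => thetaSeq L S h θ0 η k + η k

lemma lap_shift_le {b : ℝ} (hb : 0 < b) (a : ℝ) {A : Set ℝ} (hA : MeasurableSet A) :
    lap b ((fun x => x + a) ⁻¹' A) ≤ ENNReal.ofReal (Real.exp (|a| / b)) * lap b A := by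
  have hd : Measurable fun x : ℝ => ENNReal.ofReal ((2 * b)⁻¹ * Real.exp (-|x| / b)) := by
    fun_prop
  rw [lap, withDensity_apply _ (hA.preimage (measurable_add_const a)), withDensity_apply _ hA]
  have key : ∫⁻ x in (fun x => x + a) ⁻¹' A, ENNReal.ofReal ((2 * b)⁻¹ * Real.exp (-|x| / b))
      = ∫⁻ y in A, ENNReal.ofReal ((2 * b)⁻¹ * Real.exp (-|y - a| / b)) := by
    have := (measurePreserving_add_right volume a).setLIntegral_comp_preimage_emb
      (MeasurableEquiv.addRight a).measurableEmbedding
      (fun y => ENNReal.ofReal ((2 * b)⁻¹ * Real.exp (-|y - a| / b))) A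
    simpa using this
  rw [key, ← lintegral_const_mul _ hd]
  refine setLIntegral_mono (by fun_prop) fun y _ => ?_
  rw [← ENNReal.ofReal_mul (Real.exp_nonneg _)]
  refine ENNReal.ofReal_le_ofReal ?_
  have h1 : Real.exp (-|y - a| / b) ≤ Real.exp (|a| / b) * Real.exp (-|y| / b) := by
    rw [← Real.exp_add, Real.exp_le_exp, ← add_div, div_le_div_iff_of_pos_right]
    · have := abs_sub_abs_le_abs_sub y a
      linarith
    · exact hb
  calc (2 * b)⁻¹ * Real.exp (-|y - a| / b)
      ≤ (2 * b)⁻¹ * (Real.exp (|a| / b) * Real.exp (-|y| / b)) := by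
        refine mul_le_mul_of_nonneg_left h1 (by positivity)
    _ = Real.exp (|a| / b) * ((2 * b)⁻¹ * Real.exp (-|y| / b)) := by ring

lemma measure_le_of_algebra {α : Type*} [m0 : MeasurableSpace α]
    (𝒜 : Set (Set α)) (hgen : m0 ≤ MeasurableSpace.generateFrom 𝒜)
    (hmeas : ∀ C ∈ 𝒜, MeasurableSet C)
    (hempty : ∅ ∈ 𝒜) (hcompl : ∀ C ∈ 𝒜, Cᶜ ∈ 𝒜)
    (hunion : ∀ C ∈ 𝒜, ∀ D ∈ 𝒜, C ∪ D ∈ 𝒜)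
    (ν μ : Measure α) [IsFiniteMeasure ν] [IsFiniteMeasure μ]
    (hle : ∀ C ∈ 𝒜, ν C ≤ μ C)
    {S : Set α} (hS : MeasurableSet S) : ν S ≤ μ S := by
  classical
  set ρ : Measure α := ν + μ with hρ
  have hρfin : IsFiniteMeasure ρ := by infer_instance
  -- the family of approximable sets is a σ-algebra
  let D : MeasurableSpace α :=
    { MeasurableSet' := fun S => MeasurableSet S ∧
        ∀ ε : ℝ≥0∞, 0 < ε → ε ≠ ⊤ → ∃ C ∈ 𝒜, ρ (symmDiff S C) ≤ ε
      measurableSet_empty := ⟨MeasurableSet.empty, fun ε hε _ => ⟨∅, hempty, by simp⟩⟩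
      measurableSet_compl := by
        rintro S ⟨hSm, hS⟩
        refine ⟨hSm.compl, fun ε hε hε' => ?_⟩
        obtain ⟨C, hC, hC2⟩ := hS ε hε hε'
        exact ⟨Cᶜ, hcompl C hC, by rwa [compl_symmDiff_compl]⟩
      measurableSet_iUnion := by
        rintro f hf
        refine ⟨MeasurableSet.iUnion fun i => (hf i).1, fun ε hε hε' => ?_⟩
        -- choose approximations with geometric error
        have hpos : ∀ i : ℕ, (0:ℝ≥0∞) < ε * 2⁻¹ ^ (i + 2) := by
          intro i
          refine ENNReal.mul_pos hε.ne' ?_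
          simp
        choose C hC hC2 using fun i : ℕ =>
          (hf i).2 (ε * 2⁻¹ ^ (i + 2)) (hpos i)
            (by
              refine ENNReal.mul_ne_top hε' ?_
              simp [ENNReal.pow_ne_top])
        -- truncate the union
        set s : ℕ → Set α := fun m => ⋃ i ∈ Finset.range m, f i with hs
        have hsmono : Monotone s := by
          intro m m' hmm' x hx
          simp only [hs, Set.mem_iUnion, Finset.mem_range] at hx ⊢
          obtain ⟨i, hi, hx⟩ := hx
          exact ⟨i, lt_of_lt_of_le hi hmm', hx⟩
        have hsU : ⋃ m, s m = ⋃ i, f i := by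
          ext x
          simp only [hs, Set.mem_iUnion, Finset.mem_range]
          constructor
          · rintro ⟨m, i, _, hx⟩; exact ⟨i, hx⟩
          · rintro ⟨i, hx⟩; exact ⟨i + 1, i, by omega, hx⟩
        have htend : Tendsto (fun m => ρ (s m)) atTop (nhds (ρ (⋃ i, f i))) := by
          rw [← hsU]
          exact tendsto_measure_iUnion_atTop hsmono
        have hhalf : (0:ℝ≥0∞) < ε / 2 := ENNReal.div_pos hε.ne' (by norm_num)
        obtain ⟨m, hm⟩ : ∃ m, ρ (⋃ i, f i) ≤ ρ (s m) + ε / 2 := by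
          by_cases hL : ρ (⋃ i, f i) = 0
          · exact ⟨0, by simp [hL]⟩
          · have hlt : ρ (⋃ i, f i) - ε / 2 < ρ (⋃ i, f i) :=
              ENNReal.sub_lt_self (measure_ne_top ρ _) hL hhalf.ne'
            obtain ⟨m, hm⟩ := (htend.eventually (eventually_gt_nhds hlt)).exists
            exact ⟨m, by rw [← tsub_le_iff_right]; exact hm.le⟩
        refine ⟨⋃ i ∈ Finset.range m, C i, ?_, ?_⟩
        · -- finite union of elements of 𝒜
          clear hm
          induction m with
          | zero => simpa using hempty
          | succ m ih =>
              have : (⋃ i ∈ Finset.range (m+1), C i)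
                  = (⋃ i ∈ Finset.range m, C i) ∪ C m := by
                ext x; simp [Finset.mem_range]
                constructor
                · rintro ⟨i, hi, hx⟩
                  rcases Nat.lt_or_eq_of_le hi with hi | rfl
                  exacts [Or.inl ⟨i, hi, hx⟩, Or.inr hx]
                · rintro (⟨i, hi, hx⟩ | hx)
                  exacts [⟨i, by omega, hx⟩, ⟨m, by omega, hx⟩]
              rw [this]
              exact hunion _ ih _ (hC m)
        · -- measure bound
          have hsub : symmDiff (⋃ i, f i) (⋃ i ∈ Finset.range m, C i)
              ⊆ ((⋃ i, f i) \ s m) ∪ (⋃ i ∈ Finset.range m, symmDiff (f i) (C i)) := by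
            intro x hx
            rw [Set.mem_symmDiff] at hx
            rcases hx with ⟨hxF, hxC⟩ | ⟨hxC, hxF⟩
            · by_cases hxB : x ∈ s m
              · simp only [hs, Set.mem_iUnion, Finset.mem_range] at hxB
                obtain ⟨i, hi, hxf⟩ := hxB
                refine Or.inr ?_
                simp only [Set.mem_iUnion, Finset.mem_range]
                refine ⟨i, hi, ?_⟩
                rw [Set.mem_symmDiff]
                refine Or.inl ⟨hxf, fun hxc => hxC ?_⟩
                simp only [Set.mem_iUnion, Finset.mem_range]
                exact ⟨i, hi, hxc⟩
              · exact Or.inl ⟨hxF, hxB⟩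
            · simp only [Set.mem_iUnion, Finset.mem_range] at hxC
              obtain ⟨i, hi, hxc⟩ := hxC
              refine Or.inr ?_
              simp only [Set.mem_iUnion, Finset.mem_range]
              refine ⟨i, hi, ?_⟩
              rw [Set.mem_symmDiff]
              exact Or.inr ⟨hxc, fun hxf => hxF (Set.mem_iUnion.2 ⟨i, hxf⟩)⟩
          refine le_trans (measure_mono hsub) ?_
          refine le_trans (measure_union_le _ _) ?_
          have h1 : ρ ((⋃ i, f i) \ s m) ≤ ε / 2 := by
            have hBsub : s m ⊆ ⋃ i, f i := by
              intro x hx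
              simp only [hs, Set.mem_iUnion, Finset.mem_range] at hx
              obtain ⟨i, _, hx⟩ := hx
              exact Set.mem_iUnion.2 ⟨i, hx⟩
            have hBmeas : NullMeasurableSet (s m) ρ := by
              refine (MeasurableSet.biUnion (Finset.range m).countable_toSet
                fun i _ => (hf i).1).nullMeasurableSet
            rw [measure_diff hBsub hBmeas (measure_ne_top ρ _)]
            rw [tsub_le_iff_right, add_comm]
            exact hm
          have h2 : ρ (⋃ i ∈ Finset.range m, symmDiff (f i) (C i)) ≤ ε / 2 := by
            refine le_trans (measure_biUnion_finset_le _ _) ?_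
            refine le_trans (Finset.sum_le_sum fun i _ => hC2 i) ?_
            refine le_trans (ENNReal.sum_le_tsum _) ?_
            rw [ENNReal.tsum_mul_left]
            have : ∑' i : ℕ, (2:ℝ≥0∞)⁻¹ ^ (i + 2) = 2⁻¹ := by
              have h4 : ∀ i : ℕ, (2:ℝ≥0∞)⁻¹ ^ (i + 2) = 2⁻¹ ^ i * 2⁻¹ ^ 2 := fun i => pow_add _ i 2
              rw [tsum_congr h4]
              rw [ENNReal.tsum_mul_right, ENNReal.tsum_geometric]
              have : (1:ℝ≥0∞) - 2⁻¹ = 2⁻¹ := ENNReal.one_sub_inv_two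
              rw [this, inv_inv]
              rw [pow_two, ← mul_assoc, ENNReal.mul_inv_cancel (by norm_num) (by norm_num), one_mul]
            rw [this, ENNReal.div_eq_inv_mul, mul_comm]
          calc ρ ((⋃ i, f i) \ s m) + ρ (⋃ i ∈ Finset.range m, symmDiff (f i) (C i))
              ≤ ε / 2 + ε / 2 := add_le_add h1 h2
            _ = ε := ENNReal.add_halves ε }
  have hgenD : MeasurableSpace.generateFrom 𝒜 ≤ D :=
    MeasurableSpace.generateFrom_le fun C hC =>
      ⟨hmeas C hC, fun ε hε _ => ⟨C, hC, by simp⟩⟩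
  obtain ⟨-, happrox⟩ : MeasurableSet[D] S := (hgen.trans hgenD) S hS
  refine ENNReal.le_of_forall_pos_le_add fun ε hε hμ => ?_
  have hε2 : (0:ℝ≥0∞) < (ε : ℝ≥0∞) / 2 := ENNReal.div_pos (by exact_mod_cast hε.ne') (by norm_num)
  obtain ⟨C, hC, hd⟩ := happrox ((ε:ℝ≥0∞) / 2) hε2
    (ne_of_lt (ENNReal.div_lt_top ENNReal.coe_ne_top (by norm_num)))
  have hν1 : ν S ≤ ν C + ν (symmDiff S C) := by
    refine le_trans (measure_mono ?_) (measure_union_le _ _)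
    intro x hx
    by_cases hxC : x ∈ C
    · exact Or.inl hxC
    · exact Or.inr (Set.mem_symmDiff.2 (Or.inl ⟨hx, hxC⟩))
  have hμ1 : μ C ≤ μ S + μ (symmDiff S C) := by
    refine le_trans (measure_mono ?_) (measure_union_le _ _)
    intro x hx
    by_cases hxS : x ∈ S
    · exact Or.inl hxS
    · exact Or.inr (Set.mem_symmDiff.2 (Or.inr ⟨hx, hxS⟩))
  have hνρ : ν (symmDiff S C) ≤ (ε:ℝ≥0∞) / 2 :=
    le_trans (by exact Measure.le_iff'.1 (Measure.le_add_right le_rfl) _) hd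
  have hμρ : μ (symmDiff S C) ≤ (ε:ℝ≥0∞) / 2 :=
    le_trans (by exact Measure.le_iff'.1 (Measure.le_add_left le_rfl) _) hd
  calc ν S ≤ ν C + ν (symmDiff S C) := hν1
    _ ≤ μ C + (ε:ℝ≥0∞) / 2 := add_le_add (hle C hC) hνρ
    _ ≤ (μ S + μ (symmDiff S C)) + (ε:ℝ≥0∞) / 2 := add_le_add hμ1 le_rfl
    _ ≤ (μ S + (ε:ℝ≥0∞) / 2) + (ε:ℝ≥0∞) / 2 := add_le_add (add_le_add le_rfl hμρ) le_rfl
    _ = μ S + ε := by rw [add_assoc, ENNReal.add_halves]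

namespace DPaux
variable {n : ℕ}

def shiftT (i0 : Fin n) (g : ℕ → ℝ) (ω : ℕ → Fin n → ℝ) : ℕ → Fin n → ℝ :=
  fun k i => ω k i + if i = i0 then g k else 0

lemma measurable_shiftT (i0 : Fin n) (g : ℕ → ℝ) : Measurable (shiftT i0 g) := by
  refine measurable_pi_lambda _ fun k => measurable_pi_lambda _ fun i => ?_
  exact ((measurable_pi_apply i).comp (measurable_pi_apply k)).add_const _

lemma single_shift (P : Measure (ℕ → Fin n → ℝ)) [IsProbabilityMeasure P]
    (hind : iIndepFun
      (fun (p : ℕ × Fin n) (ω : ℕ → Fin n → ℝ) => ω p.1 p.2) P)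
    (i0 : Fin n) (k0 : ℕ) {b0 : ℝ} (hb0 : 0 < b0)
    (hlaw0 : Measure.map (fun ω : ℕ → Fin n → ℝ => ω k0 i0) P = lap b0)
    (a0 : ℝ) {S : Set (ℕ → Fin n → ℝ)} (hS : MeasurableSet S) :
    P (shiftT i0 (fun k => if k = k0 then a0 else 0) ⁻¹' S)
      ≤ ENNReal.ofReal (Real.exp (|a0| / b0)) * P S := by
  classical
  set p0 : ℕ × Fin n := (k0, i0) with hp0
  set X : (ℕ → Fin n → ℝ) → ℝ := fun ω => ω k0 i0 with hX
  set Y : (ℕ → Fin n → ℝ) → ({p : ℕ × Fin n // p ≠ p0} → ℝ) :=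
    fun ω p => ω p.1.1 p.1.2 with hY
  have hXm : Measurable X := (measurable_pi_apply i0).comp (measurable_pi_apply k0)
  have hYm : Measurable Y := measurable_pi_lambda _ fun p =>
    (measurable_pi_apply p.1.2).comp (measurable_pi_apply p.1.1)
  set Φ : (ℕ → Fin n → ℝ) → ({p : ℕ × Fin n // p ≠ p0} → ℝ) × ℝ :=
    fun ω => (Y ω, X ω) with hΦ
  have hΦm : Measurable Φ := hYm.prodMk hXm
  have hΦinj : Function.Injective Φ := by
    intro ω ω' hωω'
    obtain ⟨h1, h2⟩ := Prod.ext_iff.1 hωω'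
    funext k i
    by_cases hpi : ((k, i) : ℕ × Fin n) = p0
    · obtain ⟨hk, hi⟩ := Prod.ext_iff.1 hpi
      simp only at hk hi
      subst hk; subst hi
      exact h2
    · exact congrFun h1 ⟨(k, i), hpi⟩
  have hΦemb : MeasurableEmbedding Φ := hΦm.measurableEmbedding hΦinj
  set τ : ({p : ℕ × Fin n // p ≠ p0} → ℝ) × ℝ → ({p : ℕ × Fin n // p ≠ p0} → ℝ) × ℝ :=
    fun z => (z.1, z.2 + a0) with hτ
  have hτm : Measurable τ := measurable_fst.prodMk (measurable_snd.add_const a0)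
  have hconj : ∀ ω, Φ (shiftT i0 (fun k => if k = k0 then a0 else 0) ω) = τ (Φ ω) := by
    intro ω
    simp only [hΦ, hτ, hY, hX]
    refine Prod.ext (funext fun p => ?_) ?_
    · rcases p with ⟨⟨k, i⟩, hp⟩
      unfold shiftT
      dsimp only
      by_cases hi : i = i0
      · subst hi
        have hk : k ≠ k0 := fun hk => hp (by simp [hp0, hk])
        simp [hk]
      · simp [hi]
    · unfold shiftT
      dsimp only
      simp
  have hS2 : MeasurableSet (Φ '' S) := hΦemb.measurableSet_image.2 hS
  have hpre : shiftT i0 (fun k => if k = k0 then a0 else 0) ⁻¹' S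
      = Φ ⁻¹' (τ ⁻¹' (Φ '' S)) := by
    ext ω
    simp only [Set.mem_preimage, ← hconj ω]
    exact (hΦinj.mem_set_image).symm
  -- independence of Y and X
  have hIndYX : IndepFun Y X P := by
    have h2 : Indep
        (⨆ p ∈ ({p0}ᶜ : Set (ℕ × Fin n)),
          MeasurableSpace.comap (fun ω : ℕ → Fin n → ℝ => ω p.1 p.2) inferInstance)
        (⨆ p ∈ ({p0} : Set (ℕ × Fin n)),
          MeasurableSpace.comap (fun ω : ℕ → Fin n → ℝ => ω p.1 p.2) inferInstance) P := by
      refine indep_iSup_of_disjoint (fun p => ?_) hind disjoint_compl_left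
      exact ((measurable_pi_apply p.2).comp
        (measurable_pi_apply (X := fun _ : ℕ => Fin n → ℝ) p.1)).comap_le
    have e1 : (⨆ p ∈ ({p0} : Set (ℕ × Fin n)),
        MeasurableSpace.comap (fun ω : ℕ → Fin n → ℝ => ω p.1 p.2) inferInstance)
        = MeasurableSpace.comap X inferInstance := by
      rw [iSup_singleton]
    have e2 : (⨆ p ∈ ({p0}ᶜ : Set (ℕ × Fin n)),
        MeasurableSpace.comap (fun ω : ℕ → Fin n → ℝ => ω p.1 p.2) inferInstance)
        = MeasurableSpace.comap Y inferInstance := by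
      have : (inferInstance : MeasurableSpace ({p : ℕ × Fin n // p ≠ p0} → ℝ))
          = ⨆ p : {p : ℕ × Fin n // p ≠ p0},
              MeasurableSpace.comap (fun r => r p) inferInstance := rfl
      rw [this, MeasurableSpace.comap_iSup]
      simp_rw [MeasurableSpace.comap_comp]
      rw [iSup_subtype]
      rfl
    show Indep (MeasurableSpace.comap Y inferInstance) (MeasurableSpace.comap X inferInstance) P
    rw [← e1, ← e2]
    exact h2
  have hmap : P.map Φ = (P.map Y).prod (P.map X) :=
    (indepFun_iff_map_prod_eq_prod_map_map hYm.aemeasurable hXm.aemeasurable).1 hIndYX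
  have hlapprob : IsProbabilityMeasure (lap b0) := by
    rw [← hlaw0]; exact Measure.isProbabilityMeasure_map hXm.aemeasurable
  have hmapX : P.map X = lap b0 := hlaw0
  have hPYprob : IsProbabilityMeasure (P.map Y) := Measure.isProbabilityMeasure_map hYm.aemeasurable
  calc P (shiftT i0 (fun k => if k = k0 then a0 else 0) ⁻¹' S)
      = P (Φ ⁻¹' (τ ⁻¹' (Φ '' S))) := by rw [hpre]
    _ = (P.map Φ) (τ ⁻¹' (Φ '' S)) := (Measure.map_apply hΦm (hτm hS2)).symm
    _ = ((P.map Y).prod (lap b0)) (τ ⁻¹' (Φ '' S)) := by rw [hmap, hmapX]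
    _ = ∫⁻ r, (lap b0) (Prod.mk r ⁻¹' (τ ⁻¹' (Φ '' S))) ∂(P.map Y) :=
        Measure.prod_apply (hτm hS2)
    _ = ∫⁻ r, (lap b0) ((fun x => x + a0) ⁻¹' (Prod.mk r ⁻¹' (Φ '' S))) ∂(P.map Y) := rfl
    _ ≤ ∫⁻ r, ENNReal.ofReal (Real.exp (|a0| / b0)) * (lap b0) (Prod.mk r ⁻¹' (Φ '' S)) ∂(P.map Y) := by
        refine lintegral_mono fun r => ?_
        exact lap_shift_le hb0 a0 (measurable_prodMk_left hS2)
    _ = ENNReal.ofReal (Real.exp (|a0| / b0)) * ∫⁻ r, (lap b0) (Prod.mk r ⁻¹' (Φ '' S)) ∂(P.map Y) := by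
        rw [lintegral_const_mul]
        exact measurable_measure_prodMk_left hS2
    _ = ENNReal.ofReal (Real.exp (|a0| / b0)) * ((P.map Y).prod (lap b0)) (Φ '' S) := by
        rw [Measure.prod_apply hS2]
    _ = ENNReal.ofReal (Real.exp (|a0| / b0)) * P S := by
        rw [← hmapX, ← hmap, Measure.map_apply hΦm hS2, hΦinj.preimage_image]

lemma shiftT_shiftT (i0 : Fin n) (g g' : ℕ → ℝ) (ω : ℕ → Fin n → ℝ) :
    shiftT i0 g (shiftT i0 g' ω) = shiftT i0 (fun k => g k + g' k) ω := by
  funext k i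
  unfold shiftT
  by_cases hi : i = i0 <;> simp [hi] <;> ring

lemma fin_shift (P : Measure (ℕ → Fin n → ℝ)) [IsProbabilityMeasure P]
    (hind : iIndepFun
      (fun (p : ℕ × Fin n) (ω : ℕ → Fin n → ℝ) => ω p.1 p.2) P)
    (i0 : Fin n) {b : ℕ → ℝ} (hb : ∀ k, 0 < b k)
    (hlaw : ∀ k, Measure.map (fun ω : ℕ → Fin n → ℝ => ω k i0) P = lap (b k))
    (a : ℕ → ℝ) :
    ∀ m, ∀ S : Set (ℕ → Fin n → ℝ), MeasurableSet S →
      P (shiftT i0 (fun k => if k < m then a k else 0) ⁻¹' S)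
        ≤ ENNReal.ofReal (Real.exp (∑ k ∈ Finset.range m, |a k| / b k)) * P S := by
  intro m
  induction m with
  | zero =>
      intro S hS
      have : shiftT i0 (fun k => if k < 0 then a k else 0) = id := by
        funext ω k i
        unfold shiftT
        simp
      rw [this]
      simp
  | succ m ih =>
      intro S hS
      have hgfun : (fun k => if k < m + 1 then a k else 0)
          = fun k => (if k < m then a k else 0) + (if k = m then a m else 0) := by
        funext k
        by_cases hk : k < m
        · rw [if_pos (show k < m + 1 by omega), if_pos hk, if_neg (show ¬ k = m by omega),
            add_zero]
        · by_cases hk' : k = m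
          · subst hk'
            rw [if_pos (show k < k + 1 by omega), if_neg hk, zero_add, if_pos rfl]
          · rw [if_neg (show ¬ k < m + 1 by omega), if_neg hk, if_neg hk', add_zero]
      have hdec : shiftT i0 (fun k => if k < m + 1 then a k else 0)
          = shiftT i0 (fun k => if k < m then a k else 0)
            ∘ shiftT i0 (fun k => if k = m then a m else 0) := by
        funext ω
        show _ = shiftT i0 _ (shiftT i0 _ ω)
        rw [shiftT_shiftT, hgfun]
      rw [hdec, Set.preimage_comp]
      have hS' : MeasurableSet (shiftT i0 (fun k => if k < m then a k else 0) ⁻¹' S) :=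
        (measurable_shiftT _ _) hS
      calc P (shiftT i0 (fun k => if k = m then a m else 0) ⁻¹'
              (shiftT i0 (fun k => if k < m then a k else 0) ⁻¹' S))
          ≤ ENNReal.ofReal (Real.exp (|a m| / b m)) *
              P (shiftT i0 (fun k => if k < m then a k else 0) ⁻¹' S) :=
            single_shift P hind i0 m (hb m) (hlaw m) (a m) hS'
        _ ≤ ENNReal.ofReal (Real.exp (|a m| / b m)) *
              (ENNReal.ofReal (Real.exp (∑ k ∈ Finset.range m, |a k| / b k)) * P S) :=
            mul_le_mul_right (ih S hS) _
        _ = ENNReal.ofReal (Real.exp (∑ k ∈ Finset.range (m + 1), |a k| / b k)) * P S := by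
            rw [← mul_assoc, ← ENNReal.ofReal_mul (Real.exp_nonneg _), ← Real.exp_add,
              Finset.sum_range_succ, add_comm]

lemma shift_le (P : Measure (ℕ → Fin n → ℝ)) [IsProbabilityMeasure P]
    (hind : iIndepFun
      (fun (p : ℕ × Fin n) (ω : ℕ → Fin n → ℝ) => ω p.1 p.2) P)
    (i0 : Fin n) {b : ℕ → ℝ} (hb : ∀ k, 0 < b k)
    (hlaw : ∀ k, Measure.map (fun ω : ℕ → Fin n → ℝ => ω k i0) P = lap (b k))
    (a : ℕ → ℝ) (ε : ℝ)
    (hε : ∀ m, ∑ k ∈ Finset.range m, |a k| / b k ≤ ε)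
    {S : Set (ℕ → Fin n → ℝ)} (hS : MeasurableSet S) :
    P (shiftT i0 a ⁻¹' S) ≤ ENNReal.ofReal (Real.exp ε) * P S := by
  classical
  set 𝒜 : Set (Set (ℕ → Fin n → ℝ)) :=
    {C | ∃ m : ℕ, ∃ E : Set (Fin m → Fin n → ℝ), MeasurableSet E ∧
      C = (fun ω (k : Fin m) => ω k.1) ⁻¹' E} with h𝒜
  have hprm : ∀ m : ℕ, Measurable fun (ω : ℕ → Fin n → ℝ) (k : Fin m) => ω k.1 :=
    fun m => measurable_pi_lambda _ fun k => measurable_pi_apply k.1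
  have hmeas : ∀ C ∈ 𝒜, MeasurableSet C := by
    rintro C ⟨m, E, hE, rfl⟩
    exact (hprm m) hE
  have hgen : (inferInstance : MeasurableSpace (ℕ → Fin n → ℝ))
      ≤ MeasurableSpace.generateFrom 𝒜 := by
    have hkey : ∀ (k : ℕ) (i : Fin n) (B : Set ℝ), MeasurableSet B →
        MeasurableSet[MeasurableSpace.generateFrom 𝒜]
          ((fun ω : ℕ → Fin n → ℝ => ω k i) ⁻¹' B) := by
      intro k i B hB
      exact MeasurableSpace.measurableSet_generateFrom ⟨k + 1,
        {v : Fin (k+1) → Fin n → ℝ | v ⟨k, Nat.lt_succ_self k⟩ i ∈ B},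
        ((measurable_pi_apply i).comp (measurable_pi_apply (⟨k, Nat.lt_succ_self k⟩ : Fin (k+1)))) hB, rfl⟩
    have hpi1 : (inferInstance : MeasurableSpace (ℕ → Fin n → ℝ))
        = ⨆ k : ℕ, MeasurableSpace.comap (fun ω : ℕ → Fin n → ℝ => ω k) inferInstance := rfl
    have hpi2 : (inferInstance : MeasurableSpace (Fin n → ℝ))
        = ⨆ i : Fin n, MeasurableSpace.comap (fun v : Fin n → ℝ => v i) inferInstance := rfl
    rw [hpi1]
    refine iSup_le fun k => ?_
    rw [hpi2, MeasurableSpace.comap_iSup]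
    refine iSup_le fun i => ?_
    rw [MeasurableSpace.comap_comp]
    intro U hU
    obtain ⟨B, hB, rfl⟩ := hU
    exact hkey k i B hB
  have hempty : ∅ ∈ 𝒜 := ⟨0, ∅, MeasurableSet.empty, by simp⟩
  have hcompl : ∀ C ∈ 𝒜, Cᶜ ∈ 𝒜 := by
    rintro C ⟨m, E, hE, rfl⟩
    exact ⟨m, Eᶜ, hE.compl, by rw [Set.preimage_compl]⟩
  have hlift : ∀ (m1 m2 : ℕ) (hm : m1 ≤ m2) (E : Set (Fin m1 → Fin n → ℝ)),
      MeasurableSet E →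
      ∃ E' : Set (Fin m2 → Fin n → ℝ), MeasurableSet E' ∧
        (fun (ω : ℕ → Fin n → ℝ) (k : Fin m1) => ω k.1) ⁻¹' E
          = (fun (ω : ℕ → Fin n → ℝ) (k : Fin m2) => ω k.1) ⁻¹' E' := by
    intro m1 m2 hm E hE
    refine ⟨(fun (v : Fin m2 → Fin n → ℝ) (j : Fin m1) => v (Fin.castLE hm j)) ⁻¹' E,
      (measurable_pi_lambda _ fun j => measurable_pi_apply _) hE, ?_⟩
    rfl
  have hunion : ∀ C ∈ 𝒜, ∀ D ∈ 𝒜, C ∪ D ∈ 𝒜 := by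
    rintro C ⟨m1, E1, hE1, rfl⟩ D ⟨m2, E2, hE2, rfl⟩
    obtain ⟨E1', hE1', h1⟩ := hlift m1 (max m1 m2) (le_max_left _ _) E1 hE1
    obtain ⟨E2', hE2', h2⟩ := hlift m2 (max m1 m2) (le_max_right _ _) E2 hE2
    exact ⟨max m1 m2, E1' ∪ E2', hE1'.union hE2', by rw [h1, h2, Set.preimage_union]⟩
  set ν : Measure (ℕ → Fin n → ℝ) := P.map (shiftT i0 a) with hν
  set μ : Measure (ℕ → Fin n → ℝ) := ENNReal.ofReal (Real.exp ε) • P with hμ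
  have hνP : IsProbabilityMeasure ν := Measure.isProbabilityMeasure_map (measurable_shiftT i0 a).aemeasurable
  have hμF : IsFiniteMeasure μ := by
    constructor
    rw [hμ, Measure.smul_apply, smul_eq_mul]
    exact ENNReal.mul_lt_top ENNReal.ofReal_lt_top (measure_lt_top P _)
  have hle : ∀ C ∈ 𝒜, ν C ≤ μ C := by
    rintro C ⟨m, E, hE, rfl⟩
    have hCm : MeasurableSet ((fun (ω : ℕ → Fin n → ℝ) (k : Fin m) => ω k.1) ⁻¹' E) :=
      (hprm m) hE
    rw [hν, Measure.map_apply (measurable_shiftT i0 a) hCm]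
    have htrunc : shiftT i0 a ⁻¹' ((fun (ω : ℕ → Fin n → ℝ) (k : Fin m) => ω k.1) ⁻¹' E)
        = shiftT i0 (fun k => if k < m then a k else 0) ⁻¹'
            ((fun (ω : ℕ → Fin n → ℝ) (k : Fin m) => ω k.1) ⁻¹' E) := by
      ext ω
      simp only [Set.mem_preimage]
      have : (fun (k : Fin m) => shiftT i0 a ω k.1)
          = (fun (k : Fin m) => shiftT i0 (fun k => if k < m then a k else 0) ω k.1) := by
        funext j
        unfold shiftT
        funext i
        by_cases hi : i = i0
        · simp [hi, j.isLt]
        · simp [hi]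
      rw [this]
    rw [htrunc]
    calc P (shiftT i0 (fun k => if k < m then a k else 0) ⁻¹'
            ((fun (ω : ℕ → Fin n → ℝ) (k : Fin m) => ω k.1) ⁻¹' E))
        ≤ ENNReal.ofReal (Real.exp (∑ k ∈ Finset.range m, |a k| / b k)) *
            P ((fun (ω : ℕ → Fin n → ℝ) (k : Fin m) => ω k.1) ⁻¹' E) :=
          fin_shift P hind i0 hb hlaw a m _ hCm
      _ ≤ ENNReal.ofReal (Real.exp ε) * P ((fun (ω : ℕ → Fin n → ℝ) (k : Fin m) => ω k.1) ⁻¹' E) :=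
          mul_le_mul_left (ENNReal.ofReal_le_ofReal (Real.exp_le_exp.2 (hε m))) _
      _ = μ ((fun (ω : ℕ → Fin n → ℝ) (k : Fin m) => ω k.1) ⁻¹' E) := by
          rw [hμ, Measure.smul_apply, smul_eq_mul]
  have := measure_le_of_algebra 𝒜 hgen hmeas hempty hcompl hunion ν μ hle hS
  rwa [hν, Measure.map_apply (measurable_shiftT i0 a) hS, hμ, Measure.smul_apply,
    smul_eq_mul] at this

lemma measurable_thetaSeq (L S : Matrix (Fin n) (Fin n) ℝ) (h : ℝ) (θ0 : Fin n → ℝ) :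
    ∀ k, Measurable fun η : ℕ → Fin n → ℝ => thetaSeq L S h θ0 η k := by
  intro k
  induction k with
  | zero => exact measurable_const
  | succ k ih =>
      show Measurable fun η : ℕ → Fin n → ℝ =>
        thetaSeq L S h θ0 η k - h • L.mulVec (thetaSeq L S h θ0 η k + η k) + S.mulVec (η k)
      refine measurable_pi_iff.2 fun i => ?_
      have hηk : ∀ j : Fin n, Measurable fun η : ℕ → Fin n → ℝ => η k j := fun j =>
        (measurable_pi_apply j).comp (measurable_pi_apply (X := fun _ : ℕ => Fin n → ℝ) k)
      simp only [Pi.add_apply, Pi.sub_apply, Pi.smul_apply, Matrix.mulVec, dotProduct,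
        smul_eq_mul]
      refine Measurable.add (Measurable.sub (measurable_pi_iff.1 ih i) ?_) ?_
      · refine Measurable.const_mul ?_ h
        refine Finset.measurable_sum _ fun j _ => ?_
        exact ((measurable_pi_iff.1 ih j).add (hηk j)).const_mul _
      · exact Finset.measurable_sum _ fun j _ => (hηk j).const_mul _

lemma measurable_msgSeq (L S : Matrix (Fin n) (Fin n) ℝ) (h : ℝ) (θ0 : Fin n → ℝ) :
    Measurable (msgSeq L S h θ0) := by
  refine measurable_pi_lambda _ fun k => measurable_pi_iff.2 fun i => ?_
  show Measurable fun η : ℕ → Fin n → ℝ => (thetaSeq L S h θ0 η k + η k) i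
  simp only [Pi.add_apply]
  exact (measurable_pi_iff.1 (measurable_thetaSeq L S h θ0 k) i).add
    ((measurable_pi_apply i).comp (measurable_pi_apply (X := fun _ : ℕ => Fin n → ℝ) k))

lemma msg_shift (L : Matrix (Fin n) (Fin n) ℝ) (h : ℝ) (s : Fin n → ℝ) (i0 : Fin n)
    (θ1 θ2 : Fin n → ℝ) (hadj : ∀ i, i ≠ i0 → θ2 i = θ1 i) (η : ℕ → Fin n → ℝ) :
    msgSeq L (Matrix.diagonal s) h θ1 η =
      msgSeq L (Matrix.diagonal s) h θ2
        (shiftT i0 (fun k => -((1 - s i0) ^ k * (θ2 i0 - θ1 i0))) η) := by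
  set d : ℝ := θ2 i0 - θ1 i0 with hd
  set g : ℕ → ℝ := fun k => -((1 - s i0) ^ k * d) with hg
  set η' : ℕ → Fin n → ℝ := shiftT i0 g η with hη'
  set Δ : ℕ → Fin n → ℝ := fun k i => if i = i0 then (1 - s i0) ^ k * d else 0 with hΔ
  have hw : ∀ k, η' k = η k + fun i => if i = i0 then g k else 0 := fun k => rfl
  have key : ∀ k, thetaSeq L (Matrix.diagonal s) h θ2 η' k
      = thetaSeq L (Matrix.diagonal s) h θ1 η k + Δ k := by
    intro k
    induction k with
    | zero =>
        show θ2 = θ1 + Δ 0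
        funext i
        by_cases hi : i = i0
        · subst hi
          simp [hΔ, hd]
        · simp [hΔ, hi, hadj i hi]
    | succ k ih =>
        have hx : thetaSeq L (Matrix.diagonal s) h θ2 η' k + η' k
            = thetaSeq L (Matrix.diagonal s) h θ1 η k + η k := by
          rw [ih, hw k]
          funext i
          by_cases hi : i = i0
          · subst hi
            simp only [Pi.add_apply, hΔ, hg, eq_self_iff_true, if_true]
            ring
          · simp only [Pi.add_apply, hΔ, hg, if_neg hi]
            ring
        show thetaSeq L (Matrix.diagonal s) h θ2 η' k
              - h • L.mulVec (thetaSeq L (Matrix.diagonal s) h θ2 η' k + η' k)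
              + (Matrix.diagonal s).mulVec (η' k)
            = thetaSeq L (Matrix.diagonal s) h θ1 η k
              - h • L.mulVec (thetaSeq L (Matrix.diagonal s) h θ1 η k + η k)
              + (Matrix.diagonal s).mulVec (η k) + Δ (k + 1)
        rw [hx, ih]
        funext i
        simp only [Pi.add_apply, Pi.sub_apply, Pi.smul_apply, Matrix.mulVec_diagonal,
          smul_eq_mul]
        have hη'i : η' k i = η k i + if i = i0 then g k else 0 := rfl
        rw [hη'i]
        by_cases hi : i = i0
        · subst hi
          simp only [hΔ, hg, eq_self_iff_true, if_true]
          ring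
        · simp only [hΔ, hg, if_neg hi]
          ring
  funext k
  show thetaSeq L (Matrix.diagonal s) h θ1 η k + η k
      = thetaSeq L (Matrix.diagonal s) h θ2 η' k + η' k
  rw [key k, hw k]
  funext i
  by_cases hi : i = i0
  · subst hi
    simp only [Pi.add_apply, hΔ, hg, eq_self_iff_true, if_true]
    ring
  · simp only [Pi.add_apply, hΔ, hg, if_neg hi]
    ring

end DPaux

/-- **Differential privacy of the algorithm**: with `ε_i = δ q_i / (c_i (q_i - |s_i - 1|))`,
for every agent `i₀`, every pair of initial states differing only in coordinate `i₀`
by at most `δ`, and every Borel set `O` of message sequences,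
`P{η : X_{θ₀⁽¹⁾}(η) ∈ O} ≤ e^{ε_{i₀}} P{η : X_{θ₀⁽²⁾}(η) ∈ O}`; consequently the
algorithm is `ε`-differentially private with `ε = max_i ε_i`. -/
theorem differential_privacy {n : ℕ} (hn : 0 < n)
    (A : Matrix (Fin n) (Fin n) ℝ) (hAsymm : A.IsSymm) (hApos : ∀ i j, 0 ≤ A i j)
    (L : Matrix (Fin n) (Fin n) ℝ)
    (hL : L = Matrix.diagonal (fun i => ∑ j, A i j) - A)
    (hconn : ∀ v : Fin n → ℝ, L.mulVec v = 0 → ∃ a : ℝ, v = fun _ => a)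
    (h : ℝ) (hh0 : 0 < h)
    (hh1 : h < 1 / Finset.univ.sup'
      (Finset.univ_nonempty_iff.mpr (Fin.pos_iff_nonempty.mp hn)) (fun i => ∑ j, A i j))
    (s c q : Fin n → ℝ) (hs : ∀ i, s i ∈ Set.Ioo (0 : ℝ) 2)
    (hc : ∀ i, 0 < c i) (hq : ∀ i, q i ∈ Set.Ioo (|s i - 1|) 1)
    (P : Measure (ℕ → Fin n → ℝ)) [IsProbabilityMeasure P]
    (hlaw : ∀ (k : ℕ) (i : Fin n),
      Measure.map (fun ω : ℕ → Fin n → ℝ => ω k i) P = lap (c i * q i ^ k))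
    (hind : iIndepFun
      (fun (p : ℕ × Fin n) (ω : ℕ → Fin n → ℝ) => ω p.1 p.2) P)
    (δ : ℝ) (hδ : 0 < δ) :
    (∀ i0 : Fin n, ∀ θ1 θ2 : Fin n → ℝ,
      (∀ i, i ≠ i0 → θ2 i = θ1 i) → |θ2 i0 - θ1 i0| ≤ δ →
      ∀ O : Set (ℕ → Fin n → ℝ), MeasurableSet O →
        P {η | msgSeq L (Matrix.diagonal s) h θ1 η ∈ O}
          ≤ ENNReal.ofReal (Real.exp (δ * q i0 / (c i0 * (q i0 - |s i0 - 1|)))) *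
            P {η | msgSeq L (Matrix.diagonal s) h θ2 η ∈ O}) ∧
    (∀ θ1 θ2 : Fin n → ℝ,
      (∃ i0, (∀ i, i ≠ i0 → θ2 i = θ1 i) ∧ |θ2 i0 - θ1 i0| ≤ δ) →
      ∀ O : Set (ℕ → Fin n → ℝ), MeasurableSet O →
        P {η | msgSeq L (Matrix.diagonal s) h θ1 η ∈ O}
          ≤ ENNReal.ofReal (Real.exp (Finset.univ.sup'
              (Finset.univ_nonempty_iff.mpr (Fin.pos_iff_nonempty.mp hn))
              (fun i => δ * q i / (c i * (q i - |s i - 1|))))) *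
            P {η | msgSeq L (Matrix.diagonal s) h θ2 η ∈ O}) := by
  classical
  have main : ∀ i0 : Fin n, ∀ θ1 θ2 : Fin n → ℝ,
      (∀ i, i ≠ i0 → θ2 i = θ1 i) → |θ2 i0 - θ1 i0| ≤ δ →
      ∀ O : Set (ℕ → Fin n → ℝ), MeasurableSet O →
        P {η | msgSeq L (Matrix.diagonal s) h θ1 η ∈ O}
          ≤ ENNReal.ofReal (Real.exp (δ * q i0 / (c i0 * (q i0 - |s i0 - 1|)))) *
            P {η | msgSeq L (Matrix.diagonal s) h θ2 η ∈ O} := by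
    intro i0 θ1 θ2 hadj hdle O hO
    set d : ℝ := θ2 i0 - θ1 i0 with hdd
    set g : ℕ → ℝ := fun k => -((1 - s i0) ^ k * d) with hgg
    set b : ℕ → ℝ := fun k => c i0 * q i0 ^ k with hbb
    have hq0 : 0 < q i0 := lt_of_le_of_lt (abs_nonneg _) (hq i0).1
    have hb : ∀ k, 0 < b k := fun k => mul_pos (hc i0) (pow_pos hq0 k)
    have hr1 : |s i0 - 1| / q i0 < 1 := (div_lt_one hq0).2 (hq i0).1
    have hr0 : (0:ℝ) ≤ |s i0 - 1| / q i0 := div_nonneg (abs_nonneg _) hq0.le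
    have hqs : (0:ℝ) < q i0 - |s i0 - 1| := sub_pos.2 (hq i0).1
    have hterm : ∀ k, |g k| / b k = (|d| / c i0) * (|s i0 - 1| / q i0) ^ k := by
      intro k
      show |-((1 - s i0) ^ k * d)| / (c i0 * q i0 ^ k) = _
      rw [abs_neg, abs_mul, abs_pow, abs_sub_comm (1:ℝ), div_pow]
      rw [div_mul_div_comm]
      ring
    have hε : ∀ m, ∑ k ∈ Finset.range m, |g k| / b k
        ≤ δ * q i0 / (c i0 * (q i0 - |s i0 - 1|)) := by
      intro m
      have h1 : ∑ k ∈ Finset.range m, |g k| / b k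
          = (|d| / c i0) * ∑ k ∈ Finset.range m, (|s i0 - 1| / q i0) ^ k := by
        rw [Finset.mul_sum]
        exact Finset.sum_congr rfl fun k _ => hterm k
      have h2 : ∑ k ∈ Finset.range m, (|s i0 - 1| / q i0) ^ k
          ≤ (1 - |s i0 - 1| / q i0)⁻¹ := by
        refine le_trans (Summable.sum_le_tsum _ (fun k _ => pow_nonneg hr0 k)
          (summable_geometric_of_lt_one hr0 hr1)) ?_
        rw [tsum_geometric_of_lt_one hr0 hr1]
      have h3 : (1 - |s i0 - 1| / q i0)⁻¹ = q i0 / (q i0 - |s i0 - 1|) := by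
        rw [one_sub_div hq0.ne', inv_div]
      calc ∑ k ∈ Finset.range m, |g k| / b k
          = (|d| / c i0) * ∑ k ∈ Finset.range m, (|s i0 - 1| / q i0) ^ k := h1
        _ ≤ (|d| / c i0) * (1 - |s i0 - 1| / q i0)⁻¹ := by
            refine mul_le_mul_of_nonneg_left h2 (div_nonneg (abs_nonneg _) (hc i0).le)
        _ = |d| * q i0 / (c i0 * (q i0 - |s i0 - 1|)) := by
            rw [h3, div_mul_div_comm]
        _ ≤ δ * q i0 / (c i0 * (q i0 - |s i0 - 1|)) := by
            have hnum : |d| * q i0 ≤ δ * q i0 :=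
              mul_le_mul_of_nonneg_right hdle hq0.le
            exact (div_le_div_iff_of_pos_right (mul_pos (hc i0) hqs)).2 hnum
    have hlawb : ∀ k, Measure.map (fun ω : ℕ → Fin n → ℝ => ω k i0) P = lap (b k) :=
      fun k => hlaw k i0
    have hset : {η | msgSeq L (Matrix.diagonal s) h θ1 η ∈ O}
        = DPaux.shiftT i0 g ⁻¹' {η | msgSeq L (Matrix.diagonal s) h θ2 η ∈ O} := by
      ext η
      rw [Set.mem_setOf_eq, Set.mem_preimage, Set.mem_setOf_eq,
        DPaux.msg_shift L h s i0 θ1 θ2 hadj η]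
    rw [hset]
    exact DPaux.shift_le P hind i0 hb hlawb g _ hε ((DPaux.measurable_msgSeq L _ h θ2) hO)
  refine ⟨main, ?_⟩
  rintro θ1 θ2 ⟨i0, hadj, hdle⟩ O hO
  refine le_trans (main i0 θ1 θ2 hadj hdle O hO) ?_
  refine mul_le_mul_left (ENNReal.ofReal_le_ofReal (Real.exp_le_exp.2 ?_)) _
  exact Finset.le_sup' (fun i => δ * q i / (c i * (q i - |s i - 1|))) (Finset.mem_univ i0)
end
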